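/- arXiv:2012.06762 — 2 statements merged into one kernel-verified Lean document; each statement's English description precedes it below -/
import Mathlib

section
/- Under the log-linear binary mediator model, linear outcome model, and A ⊥ U | X, the vector function ψ̃ with components ψ̃1=Y−θ1M−θ2A, ψ̃2=(Y−θ1M)·(M·exp(−θ3A)−h̃(X)), ψ̃3=M·exp(−θ3A) satisfies E(ψ̃|A,X)=E(ψ̃|X) almost surely. -/
open MeasureTheory ProbabilityTheory Set Filter

namespace Stmt17Aux

variable {Ω : Type*} {mΩ : MeasurableSpace Ω} {μ : Measure Ω} [IsProbabilityMeasure μ]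

lemma comap_pair {β γ : Type*} [mβ : MeasurableSpace β] [mγ : MeasurableSpace γ]
    (f : Ω → β) (g : Ω → γ) :
    MeasurableSpace.comap (fun ω => (f ω, g ω)) inferInstance = mβ.comap f ⊔ mγ.comap g := by
  show MeasurableSpace.comap (fun ω => (f ω, g ω)) (mβ.comap Prod.fst ⊔ mγ.comap Prod.snd) = _
  rw [MeasurableSpace.comap_sup, MeasurableSpace.comap_comp, MeasurableSpace.comap_comp]
  rfl

lemma sup_eq_generateFrom_inter (m₁ m₂ : MeasurableSpace Ω) :
    m₁ ⊔ m₂ = MeasurableSpace.generateFrom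
      {r | ∃ s t, MeasurableSet[m₁] s ∧ MeasurableSet[m₂] t ∧ r = s ∩ t} := by
  refine le_antisymm (sup_le ?_ ?_) (MeasurableSpace.generateFrom_le ?_)
  · intro s hs
    exact MeasurableSpace.measurableSet_generateFrom
      ⟨s, univ, hs, MeasurableSet.univ, (inter_univ s).symm⟩
  · intro t ht
    exact MeasurableSpace.measurableSet_generateFrom
      ⟨univ, t, MeasurableSet.univ, ht, (univ_inter t).symm⟩
  · rintro r ⟨s, t, hs, ht, rfl⟩
    exact ((le_sup_left : m₁ ≤ m₁ ⊔ m₂) s hs).inter ((le_sup_right : m₂ ≤ m₁ ⊔ m₂) t ht)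

lemma isPiSystem_inter (m₁ m₂ : MeasurableSpace Ω) :
    IsPiSystem {r | ∃ s t, MeasurableSet[m₁] s ∧ MeasurableSet[m₂] t ∧ r = s ∩ t} := by
  rintro _ ⟨s₁, t₁, hs₁, ht₁, rfl⟩ _ ⟨s₂, t₂, hs₂, ht₂, rfl⟩ -
  exact ⟨s₁ ∩ s₂, t₁ ∩ t₂, hs₁.inter hs₂, ht₁.inter ht₂, by rw [inter_inter_inter_comm]⟩

lemma condexp_ae_eq_of_forall_setIntegral_pi {m : MeasurableSpace Ω} (hm : m ≤ mΩ)
    {P : Set (Set Ω)} (hgen : m = MeasurableSpace.generateFrom P) (hpi : IsPiSystem P)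
    {f c : Ω → ℝ} (hf : Integrable f μ) (hc : Integrable c μ)
    (hcm : AEStronglyMeasurable[m] c μ)
    (htot : ∫ ω, f ω ∂μ = ∫ ω, c ω ∂μ)
    (hbase : ∀ s ∈ P, ∫ ω in s, f ω ∂μ = ∫ ω in s, c ω ∂μ) :
    μ[f|m] =ᵐ[μ] c := by
  letI : MeasurableSpace Ω := mΩ
  have key : ∀ ⦃s⦄, MeasurableSet[m] s → ∫ ω in s, f ω ∂μ = ∫ ω in s, c ω ∂μ := by
    refine @MeasurableSpace.induction_on_inter Ω m
      (fun s _ => ∫ ω in s, f ω ∂μ = ∫ ω in s, c ω ∂μ) P hgen hpi (by simp) hbase ?_ ?_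
    · intro t htm hteq
      have h1 : ∫ ω in t, f ω ∂μ + ∫ ω in tᶜ, f ω ∂μ = ∫ ω, f ω ∂μ :=
        integral_add_compl (hm t htm) hf
      have h2 : ∫ ω in t, c ω ∂μ + ∫ ω in tᶜ, c ω ∂μ = ∫ ω, c ω ∂μ :=
        integral_add_compl (hm t htm) hc
      linarith
    · intro t hdisj htm hteq
      have h1 := hasSum_integral_iUnion (μ := μ) (f := f) (fun i => hm _ (htm i)) hdisj
        hf.integrableOn
      have h2 := hasSum_integral_iUnion (μ := μ) (f := c) (fun i => hm _ (htm i)) hdisj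
        hc.integrableOn
      have he : (fun n => ∫ ω in t n, f ω ∂μ) = fun n => ∫ ω in t n, c ω ∂μ := funext hteq
      rw [he] at h1
      exact h1.unique h2
  exact (ae_eq_condExp_of_forall_setIntegral_eq hm hf (fun s _ _ => hc.integrableOn)
    (fun s hs _ => (key hs).symm) hcm).symm

lemma integral_mul_condexp {m : MeasurableSpace Ω} (hm : m ≤ mΩ) {w g : Ω → ℝ}
    (hw : StronglyMeasurable[m] w) (hg : Integrable g μ) (hwg : Integrable (fun ω => w ω * g ω) μ) :
    ∫ ω, w ω * g ω ∂μ = ∫ ω, w ω * (μ[g|m]) ω ∂μ := by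
  have h := condExp_mul_of_stronglyMeasurable_left hw (by exact hwg) hg
  calc ∫ ω, w ω * g ω ∂μ = ∫ ω, (μ[w * g|m]) ω ∂μ := (integral_condExp (f := w * g) hm).symm
  _ = ∫ ω, (w * μ[g|m]) ω ∂μ := integral_congr_ae h
  _ = _ := rfl

lemma setIntegral_eq_integral_indicator_mul {r : Set Ω} (hr : MeasurableSet r) (φ : Ω → ℝ) :
    ∫ ω in r, φ ω ∂μ = ∫ ω, r.indicator (fun _ => (1:ℝ)) ω * φ ω ∂μ := by
  rw [← integral_indicator hr]
  congr 1
  funext ω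
  by_cases hw : ω ∈ r <;> simp [hw]

lemma key_lemma {m0 m₁ m₂ : MeasurableSpace Ω} (hm0 : m0 ≤ mΩ) (h1 : m₁ ≤ mΩ) (h2 : m₂ ≤ mΩ)
    (hCI : ∀ s t, MeasurableSet[m₁] s → MeasurableSet[m₂] t →
      μ[(s ∩ t).indicator (fun _ => (1:ℝ))|m0] =ᵐ[μ]
        μ[s.indicator (fun _ => (1:ℝ))|m0] * μ[t.indicator (fun _ => (1:ℝ))|m0])
    {f : Ω → ℝ} (hf : Integrable f μ) (hfm : StronglyMeasurable[m0 ⊔ m₂] f) :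
    μ[f|m₁ ⊔ m0] =ᵐ[μ] μ[f|m0] := by
  letI : MeasurableSpace Ω := mΩ
  have hm02 : m0 ⊔ m₂ ≤ mΩ := sup_le hm0 h2
  have hm10 : m₁ ⊔ m0 ≤ mΩ := sup_le h1 hm0
  have hL0 : ∀ s, MeasurableSet[m₁] s →
      μ[s.indicator (fun _ => (1:ℝ))|m0 ⊔ m₂] =ᵐ[μ] μ[s.indicator (fun _ => (1:ℝ))|m0] := by
    intro s hs
    have hsΩ : MeasurableSet s := h1 s hs
    have hind_int : Integrable (s.indicator (fun _ => (1:ℝ))) μ :=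
      (integrable_const 1).indicator hsΩ
    have heSM : StronglyMeasurable[m0] (μ[s.indicator (fun _ => (1:ℝ))|m0]) :=
      stronglyMeasurable_condExp
    refine condexp_ae_eq_of_forall_setIntegral_pi hm02 (sup_eq_generateFrom_inter m0 m₂)
      (isPiSystem_inter m0 m₂) hind_int integrable_condExp
      ((heSM.mono (le_sup_left : m0 ≤ m0 ⊔ m₂)).aestronglyMeasurable (μ := μ)) (integral_condExp hm0).symm ?_
    rintro r ⟨t₁, t₂, ht₁, ht₂, rfl⟩
    have ht₁Ω : MeasurableSet t₁ := hm0 t₁ ht₁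
    have ht₂Ω : MeasurableSet t₂ := h2 t₂ ht₂
    set e := μ[s.indicator (fun _ => (1:ℝ))|m0] with he
    have hLHS : ∫ ω in t₁ ∩ t₂, s.indicator (fun _ => (1:ℝ)) ω ∂μ
        = (μ (t₁ ∩ (s ∩ t₂))).toReal := by
      rw [setIntegral_indicator hsΩ]
      simp [Measure.restrict_apply ((ht₁Ω.inter ht₂Ω).inter hsΩ)]
      rw [inter_assoc, inter_comm t₂ s]
      rfl
    refine hLHS.trans (Eq.symm ?_)
    have hSMIt₁e : StronglyMeasurable[m0] (fun ω => t₁.indicator (fun _ => (1:ℝ)) ω * e ω) :=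
      (stronglyMeasurable_const.indicator ht₁).mul heSM
    calc ∫ ω in t₁ ∩ t₂, e ω ∂μ
        = ∫ ω, (t₁ ∩ t₂).indicator (fun _ => (1:ℝ)) ω * e ω ∂μ :=
          setIntegral_eq_integral_indicator_mul (ht₁Ω.inter ht₂Ω) e
      _ = ∫ ω, (t₁.indicator (fun _ => (1:ℝ)) ω * e ω) * t₂.indicator (fun _ => (1:ℝ)) ω ∂μ := by
          congr 1; funext ω; by_cases h₁ : ω ∈ t₁ <;> by_cases h₂ : ω ∈ t₂ <;>
            simp [h₁, h₂]
      _ = ∫ ω, (t₁.indicator (fun _ => (1:ℝ)) ω * e ω)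
            * (μ[t₂.indicator (fun _ => (1:ℝ))|m0]) ω ∂μ := by
          refine integral_mul_condexp hm0 hSMIt₁e ((integrable_const 1).indicator ht₂Ω) ?_
          refine Integrable.mono' (g := fun ω => |e ω|) ((integrable_condExp (m := m0)).abs) ?_ ?_
          · exact (((stronglyMeasurable_const.indicator ht₁Ω).mul (heSM.mono hm0)).mul
              (stronglyMeasurable_const.indicator ht₂Ω)).aestronglyMeasurable
          · refine Eventually.of_forall fun ω => ?_
            by_cases h₁ : ω ∈ t₁ <;> by_cases h₂ : ω ∈ t₂ <;>
              simp [h₁, h₂, abs_nonneg, Real.norm_eq_abs, le_abs_self]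
      _ = ∫ ω, t₁.indicator (fun _ => (1:ℝ)) ω
            * (μ[(s ∩ t₂).indicator (fun _ => (1:ℝ))|m0]) ω ∂μ := by
          refine integral_congr_ae ?_
          filter_upwards [hCI s t₂ hs ht₂] with ω hω
          rw [mul_assoc]
          exact congrArg _ hω.symm
      _ = ∫ ω, t₁.indicator (fun _ => (1:ℝ)) ω * (s ∩ t₂).indicator (fun _ => (1:ℝ)) ω ∂μ := by
          refine (integral_mul_condexp hm0 (stronglyMeasurable_const.indicator ht₁)
            ((integrable_const 1).indicator (hsΩ.inter ht₂Ω)) ?_).symm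
          refine Integrable.mono' (integrable_const 1) ?_ ?_
          · exact ((stronglyMeasurable_const.indicator ht₁Ω).mul
              (stronglyMeasurable_const.indicator (hsΩ.inter ht₂Ω))).aestronglyMeasurable
          · refine Eventually.of_forall fun ω => ?_
            by_cases h₁ : ω ∈ t₁ <;> by_cases h₂ : ω ∈ s ∩ t₂ <;> simp [h₁, h₂]
      _ = (μ (t₁ ∩ (s ∩ t₂))).toReal := by
          have : (fun ω => t₁.indicator (fun _ => (1:ℝ)) ω * (s ∩ t₂).indicator (fun _ => (1:ℝ)) ω)
              = (t₁ ∩ (s ∩ t₂)).indicator (fun _ => (1:ℝ)) := by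
            funext ω; by_cases h₁ : ω ∈ t₁ <;> by_cases h₂ : ω ∈ s ∩ t₂ <;> simp [h₁, h₂]
          rw [this]
          exact integral_indicator_one (ht₁Ω.inter (hsΩ.inter ht₂Ω))
  -- main part
  refine condexp_ae_eq_of_forall_setIntegral_pi hm10 (sup_eq_generateFrom_inter m₁ m0)
    (isPiSystem_inter m₁ m0) hf integrable_condExp
    (((stronglyMeasurable_condExp (f := f) (μ := μ) (m := m0)).mono (le_sup_right : m0 ≤ m₁ ⊔ m0)).aestronglyMeasurable (μ := μ))
    (integral_condExp hm0).symm ?_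
  rintro r ⟨s, t, hs, ht, rfl⟩
  have hsΩ : MeasurableSet s := h1 s hs
  have htΩ : MeasurableSet t := hm0 t ht
  set c := μ[f|m0] with hc
  set e := μ[s.indicator (fun _ => (1:ℝ))|m0] with he
  have he0 : 0 ≤ᵐ[μ] e :=
    condExp_nonneg (Eventually.of_forall fun ω => indicator_nonneg (fun _ _ => zero_le_one) ω)
  have he1 : e ≤ᵐ[μ] fun _ => (1:ℝ) := by
    have h2' : (fun _ => (1:ℝ)) =ᵐ[μ] μ[fun _ => (1:ℝ)|m0] := by
      rw [condExp_const hm0]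
    refine (condExp_mono ((integrable_const 1).indicator hsΩ) (integrable_const 1)
      (Eventually.of_forall fun ω => ?_)).trans h2'.symm.le
    by_cases hw : ω ∈ s <;> simp [hw]
  have hJ : ∀ (ρ : Ω → ℝ), Integrable ρ μ → StronglyMeasurable[m0 ⊔ m₂] ρ →
      ∫ ω in s ∩ t, ρ ω ∂μ = ∫ ω, (t.indicator (fun _ => (1:ℝ)) ω * ρ ω) * e ω ∂μ := by
    intro ρ hρi hρm
    calc ∫ ω in s ∩ t, ρ ω ∂μ
        = ∫ ω, (s ∩ t).indicator (fun _ => (1:ℝ)) ω * ρ ω ∂μ :=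
          setIntegral_eq_integral_indicator_mul (hsΩ.inter htΩ) ρ
      _ = ∫ ω, (t.indicator (fun _ => (1:ℝ)) ω * ρ ω) * s.indicator (fun _ => (1:ℝ)) ω ∂μ := by
          congr 1; funext ω; by_cases h₁ : ω ∈ s <;> by_cases h₂ : ω ∈ t <;>
            simp [h₁, h₂] <;> ring
      _ = ∫ ω, (t.indicator (fun _ => (1:ℝ)) ω * ρ ω)
            * (μ[s.indicator (fun _ => (1:ℝ))|m0 ⊔ m₂]) ω ∂μ := by
          refine integral_mul_condexp hm02
            ((stronglyMeasurable_const.indicator ((le_sup_left : m0 ≤ m0 ⊔ m₂) t ht)).mul hρm)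
            ((integrable_const 1).indicator hsΩ) ?_
          refine Integrable.mono' hρi.abs ?_ ?_
          · exact (((stronglyMeasurable_const.indicator htΩ).mul (hρm.mono hm02)).mul
              (stronglyMeasurable_const.indicator hsΩ)).aestronglyMeasurable
          · refine Eventually.of_forall fun ω => ?_
            by_cases h₁ : ω ∈ s <;> by_cases h₂ : ω ∈ t <;>
              simp [h₁, h₂, Real.norm_eq_abs, le_abs_self, abs_nonneg]
      _ = ∫ ω, (t.indicator (fun _ => (1:ℝ)) ω * ρ ω) * e ω ∂μ := by
          refine integral_congr_ae ?_
          filter_upwards [hL0 s hs] with ω hω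
          rw [hω]
  rw [hJ f hf hfm, hJ c integrable_condExp (stronglyMeasurable_condExp.mono le_sup_left)]
  have hSMte : StronglyMeasurable[m0] (fun ω => t.indicator (fun _ => (1:ℝ)) ω * e ω) :=
    (stronglyMeasurable_const.indicator ht).mul stronglyMeasurable_condExp
  have hbd : ∀ {ρ : Ω → ℝ}, AEStronglyMeasurable ρ μ →
      Integrable (fun ω => (t.indicator (fun _ => (1:ℝ)) ω * e ω) * ρ ω) μ → True := fun _ _ => trivial
  calc ∫ ω, (t.indicator (fun _ => (1:ℝ)) ω * f ω) * e ω ∂μ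
      = ∫ ω, (t.indicator (fun _ => (1:ℝ)) ω * e ω) * f ω ∂μ := by
        congr 1; funext ω; ring
    _ = ∫ ω, (t.indicator (fun _ => (1:ℝ)) ω * e ω) * c ω ∂μ := by
        refine integral_mul_condexp hm0 hSMte hf ?_
        refine Integrable.mono' hf.abs ?_ ?_
        · exact (((stronglyMeasurable_const.indicator htΩ).mul
            (stronglyMeasurable_condExp.mono hm0)).mul (hfm.mono hm02)).aestronglyMeasurable
        · filter_upwards [he0, he1] with ω h0 h1'
          simp only [Pi.zero_apply] at h0
          by_cases hw : ω ∈ t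
          · simp only [indicator_of_mem hw, one_mul, Real.norm_eq_abs, abs_mul]
            calc |e ω| * |f ω| ≤ 1 * |f ω| := by
                  have : |e ω| ≤ 1 := abs_le.mpr ⟨by linarith, h1'⟩
                  exact mul_le_mul_of_nonneg_right this (abs_nonneg _)
              _ = |f ω| := one_mul _
          · simp [indicator_of_notMem hw, abs_nonneg]
    _ = ∫ ω, (t.indicator (fun _ => (1:ℝ)) ω * c ω) * e ω ∂μ := by
        congr 1; funext ω; ring

end Stmt17Aux

open MeasureTheory ProbabilityTheory Set Filter

/-- under the log-linear binary mediator model, the linear outcome model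
and `A ⊥ U | X`, the vector `ψ̃` with components `ψ̃1 = Y − θ1·M − θ2·A`,
`ψ̃2 = (Y − θ1·M)·(M·exp(−θ3·A) − h̃(X))`, `ψ̃3 = M·exp(−θ3·A)`, where
`h̃(X) = E[exp(h(X,U))|X]`, satisfies `E(ψ̃|A,X) = E(ψ̃|X)` almost surely. -/
theorem stmt17 {Ω 𝓧 𝓤 : Type*} {mΩ : MeasurableSpace Ω} [StandardBorelSpace Ω] [Nonempty Ω]
    {m𝓧 : MeasurableSpace 𝓧} {m𝓤 : MeasurableSpace 𝓤}
    (μ : Measure Ω) [IsProbabilityMeasure μ]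
    (Y A M : Ω → ℝ) (X : Ω → 𝓧) (U : Ω → 𝓤)
    (hYm : Measurable Y) (hAm : Measurable A) (hMm : Measurable M)
    (hXm : Measurable X) (hUm : Measurable U)
    (hY : MemLp Y 2 μ) (hA : MemLp A 2 μ)
    (hMbin : ∀ᵐ ω ∂μ, M ω = 0 ∨ M ω = 1)
    (θ1 θ2 θ3 : ℝ) (g h : 𝓧 × 𝓤 → ℝ) (hg : Measurable g) (hh : Measurable h)
    (hgi : Integrable (fun ω => g (X ω, U ω)) μ)
    (hhi : Integrable (fun ω => Real.exp (h (X ω, U ω))) μ)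
    (hghi : Integrable (fun ω => g (X ω, U ω) * Real.exp (h (X ω, U ω))) μ)
    (hout : μ[Y | MeasurableSpace.comap (fun ω => (M ω, A ω, X ω, U ω)) inferInstance]
        =ᵐ[μ] fun ω => θ1 * M ω + θ2 * A ω + g (X ω, U ω))
    (hmed : μ[M | MeasurableSpace.comap (fun ω => (A ω, X ω, U ω)) inferInstance]
        =ᵐ[μ] fun ω => Real.exp (θ3 * A ω + h (X ω, U ω)))
    (hAU : CondIndepFun (MeasurableSpace.comap X m𝓧) hXm.comap_le A U μ)
    (htil : Ω → ℝ)
    (hhtil : htil =ᵐ[μ]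
      μ[fun ω => Real.exp (h (X ω, U ω)) | MeasurableSpace.comap X m𝓧]) :
    (μ[fun ω => Y ω - θ1 * M ω - θ2 * A ω
        | MeasurableSpace.comap (fun ω => (A ω, X ω)) inferInstance]
      =ᵐ[μ] μ[fun ω => Y ω - θ1 * M ω - θ2 * A ω | MeasurableSpace.comap X m𝓧])
    ∧ (μ[fun ω => (Y ω - θ1 * M ω) * (M ω * Real.exp (-θ3 * A ω) - htil ω)
        | MeasurableSpace.comap (fun ω => (A ω, X ω)) inferInstance]
      =ᵐ[μ] μ[fun ω => (Y ω - θ1 * M ω) * (M ω * Real.exp (-θ3 * A ω) - htil ω)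
        | MeasurableSpace.comap X m𝓧])
    ∧ (μ[fun ω => M ω * Real.exp (-θ3 * A ω)
        | MeasurableSpace.comap (fun ω => (A ω, X ω)) inferInstance]
      =ᵐ[μ] μ[fun ω => M ω * Real.exp (-θ3 * A ω) | MeasurableSpace.comap X m𝓧]) := by
  set m0 := MeasurableSpace.comap X m𝓧 with hm0def
  set ma := MeasurableSpace.comap A inferInstance with hmadef
  set mu := MeasurableSpace.comap U m𝓤 with hmudef
  set mM := MeasurableSpace.comap M inferInstance with hmMdef
  letI : MeasurableSpace Ω := mΩ
  have hm0 : m0 ≤ mΩ := hXm.comap_le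
  have hma : ma ≤ mΩ := hAm.comap_le
  have hmu : mu ≤ mΩ := hUm.comap_le
  have hmMle : mM ≤ mΩ := hMm.comap_le
  have eAX : MeasurableSpace.comap (fun ω => (A ω, X ω)) inferInstance = ma ⊔ m0 :=
    Stmt17Aux.comap_pair A X
  have eXU : MeasurableSpace.comap (fun ω => (X ω, U ω)) inferInstance = m0 ⊔ mu :=
    Stmt17Aux.comap_pair X U
  have eAXU : MeasurableSpace.comap (fun ω => (A ω, X ω, U ω)) inferInstance
      = ma ⊔ (m0 ⊔ mu) := by
    rw [Stmt17Aux.comap_pair A (fun ω => (X ω, U ω)), eXU]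
  have eMAXU : MeasurableSpace.comap (fun ω => (M ω, A ω, X ω, U ω)) inferInstance
      = mM ⊔ (ma ⊔ (m0 ⊔ mu)) := by
    rw [Stmt17Aux.comap_pair M (fun ω => (A ω, X ω, U ω)), eAXU]
  rw [eAX]
  rw [eAXU] at hmed
  rw [eMAXU] at hout
  -- σ-algebra ordering facts
  have hmaX : ma ⊔ m0 ≤ mΩ := sup_le hma hm0
  have hmXU : m0 ⊔ mu ≤ mΩ := sup_le hm0 hmu
  have hmAXU : ma ⊔ (m0 ⊔ mu) ≤ mΩ := sup_le hma hmXU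
  have hmall : mM ⊔ (ma ⊔ (m0 ⊔ mu)) ≤ mΩ := sup_le hmMle hmAXU
  have hmaX_AXU : ma ⊔ m0 ≤ ma ⊔ (m0 ⊔ mu) := sup_le_sup_left le_sup_left ma
  have hm0_XU : m0 ≤ m0 ⊔ mu := le_sup_left
  have hmu_XU : mu ≤ m0 ⊔ mu := le_sup_right
  have hma_AXU : ma ≤ ma ⊔ (m0 ⊔ mu) := le_sup_left
  have hm0_AXU : m0 ≤ ma ⊔ (m0 ⊔ mu) := hm0_XU.trans le_sup_right
  have hmAXU_all : ma ⊔ (m0 ⊔ mu) ≤ mM ⊔ (ma ⊔ (m0 ⊔ mu)) := le_sup_right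
  have hmM_all : mM ≤ mM ⊔ (ma ⊔ (m0 ⊔ mu)) := le_sup_left
  have hmaX_all : ma ⊔ m0 ≤ mM ⊔ (ma ⊔ (m0 ⊔ mu)) := hmaX_AXU.trans hmAXU_all
  have hma_all : ma ≤ mM ⊔ (ma ⊔ (m0 ⊔ mu)) := hma_AXU.trans hmAXU_all
  have hm0_all : m0 ≤ mM ⊔ (ma ⊔ (m0 ⊔ mu)) := hm0_AXU.trans hmAXU_all
  have hm0_maX : m0 ≤ ma ⊔ m0 := le_sup_right
  have hma_maX : ma ≤ ma ⊔ m0 := le_sup_left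
  have hma_0a : ma ≤ m0 ⊔ ma := le_sup_right
  -- conditional independence in product form
  have hCI : ∀ s t, MeasurableSet[ma] s → MeasurableSet[mu] t →
      μ[(s ∩ t).indicator (fun _ => (1:ℝ))|m0] =ᵐ[μ]
        μ[s.indicator (fun _ => (1:ℝ))|m0] * μ[t.indicator (fun _ => (1:ℝ))|m0] := by
    intro s t hs ht
    exact (condIndepFun_iff m0 hXm.comap_le A U hAm hUm μ).mp hAU s t hs ht
  have hCIflip : ∀ s t, MeasurableSet[mu] s → MeasurableSet[ma] t →
      μ[(s ∩ t).indicator (fun _ => (1:ℝ))|m0] =ᵐ[μ]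
        μ[s.indicator (fun _ => (1:ℝ))|m0] * μ[t.indicator (fun _ => (1:ℝ))|m0] := by
    intro s t hs ht
    rw [inter_comm]
    exact (hCI t s ht hs).trans (EventuallyEq.of_eq (mul_comm _ _))
  have KEY1 : ∀ {f : Ω → ℝ}, Integrable f μ → StronglyMeasurable[m0 ⊔ mu] f →
      μ[f|ma ⊔ m0] =ᵐ[μ] μ[f|m0] := fun hf hfm =>
    Stmt17Aux.key_lemma hm0 hma hmu hCI hf hfm
  have KEY2 : ∀ {f : Ω → ℝ}, Integrable f μ → StronglyMeasurable[m0 ⊔ ma] f →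
      μ[f|m0 ⊔ mu] =ᵐ[μ] μ[f|m0] := by
    intro f hf hfm
    have hk := Stmt17Aux.key_lemma hm0 hmu hma hCIflip hf hfm
    rwa [sup_comm mu m0] at hk
  -- measurability facts
  have hAma : Measurable[ma] A := Measurable.of_comap_le le_rfl
  have hMmM : Measurable[mM] M := Measurable.of_comap_le le_rfl
  have hXUm : Measurable[m0 ⊔ mu] (fun ω => (X ω, U ω)) := Measurable.of_comap_le eXU.le
  have hgSM : StronglyMeasurable[m0 ⊔ mu] (fun ω => g (X ω, U ω)) :=
    (hg.comp hXUm).stronglyMeasurable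
  have hexpSM : StronglyMeasurable[m0 ⊔ mu] (fun ω => Real.exp (h (X ω, U ω))) :=
    ((hh.comp hXUm).exp).stronglyMeasurable
  -- integrability facts
  have hYi : Integrable Y μ := hY.integrable one_le_two
  have hAi : Integrable A μ := hA.integrable one_le_two
  have hMi : Integrable M μ := by
    refine Integrable.mono' (integrable_const (1:ℝ)) hMm.aestronglyMeasurable ?_
    filter_upwards [hMbin] with ω hω
    rcases hω with hω | hω <;> simp [hω]
  -- conditional expectation of exp(h)
  set H := μ[(fun ω => Real.exp (h (X ω, U ω)))|m0] with hHdef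
  have hHSM : StronglyMeasurable[m0] H := stronglyMeasurable_condExp
  have hHi : Integrable H μ := integrable_condExp
  -- integrability of ψ₃ = M·exp(−θ₃A)
  have hexpAm : Measurable (fun ω => Real.exp (-θ3 * A ω)) := (hAm.const_mul (-θ3)).exp
  have hexpAma : Measurable[ma ⊔ (m0 ⊔ mu)] (fun ω => Real.exp (-θ3 * A ω)) :=
    ((hAma.mono hma_AXU le_rfl).const_mul (-θ3)).exp
  have hψ3i : Integrable (fun ω => M ω * Real.exp (-θ3 * A ω)) μ := by
    set F : ℕ → Ω → ℝ := fun n ω => min (Real.exp (-θ3 * A ω)) n with hFdef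
    have hFm : ∀ n, Measurable[ma ⊔ (m0 ⊔ mu)] (F n) := fun n => hexpAma.min measurable_const
    have hF0 : ∀ n ω, 0 ≤ F n ω := fun n ω => le_min (Real.exp_pos _).le (Nat.cast_nonneg n)
    have hMF : ∀ n, Integrable (fun ω => F n ω * M ω) μ := by
      intro n
      refine Integrable.mono' (integrable_const (n:ℝ)) ?_ ?_
      · exact (((hFm n).mono hmAXU le_rfl).mul hMm).aestronglyMeasurable
      · filter_upwards [hMbin] with ω hω
        have h1 : F n ω ≤ (n:ℝ) := min_le_right _ _
        rcases hω with hω | hω <;>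
          simp only [hω, mul_zero, mul_one, norm_zero, Real.norm_eq_abs]
        · exact Nat.cast_nonneg n
        · exact (le_of_eq (abs_of_nonneg (hF0 n ω))).trans h1
    have hcond : ∀ n, μ[(fun ω => F n ω * M ω)|ma ⊔ (m0 ⊔ mu)] =ᵐ[μ]
        fun ω => F n ω * Real.exp (θ3 * A ω + h (X ω, U ω)) := by
      intro n
      have hpull := condExp_mul_of_stronglyMeasurable_left (m := ma ⊔ (m0 ⊔ mu)) (μ := μ)
        (f := F n) (g := M) ((hFm n).stronglyMeasurable) (by exact hMF n) hMi
      refine (EventuallyEq.trans (by exact hpull) ?_)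
      filter_upwards [hmed] with ω hω
      simp only [Pi.mul_apply]
      rw [hω]
    have hle : ∀ n, ∫ ω, F n ω * M ω ∂μ ≤ ∫ ω, Real.exp (h (X ω, U ω)) ∂μ := by
      intro n
      have h1 : ∫ ω, F n ω * M ω ∂μ = ∫ ω, F n ω * Real.exp (θ3 * A ω + h (X ω, U ω)) ∂μ := by
        rw [← integral_condExp (f := fun ω => F n ω * M ω) hmAXU]
        exact integral_congr_ae (hcond n)
      rw [h1]
      refine integral_mono_ae (Integrable.congr integrable_condExp (hcond n)) hhi ?_
      refine Eventually.of_forall fun ω => ?_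
      have h2 : F n ω * Real.exp (θ3 * A ω) ≤ 1 := by
        have h3 : F n ω ≤ Real.exp (-θ3 * A ω) := min_le_left _ _
        have h4 := mul_le_mul_of_nonneg_right h3 (Real.exp_pos (θ3 * A ω)).le
        rwa [← Real.exp_add, neg_mul, neg_add_cancel, Real.exp_zero] at h4
      calc F n ω * Real.exp (θ3 * A ω + h (X ω, U ω))
          = (F n ω * Real.exp (θ3 * A ω)) * Real.exp (h (X ω, U ω)) := by
            rw [Real.exp_add]; ring
        _ ≤ 1 * Real.exp (h (X ω, U ω)) :=
            mul_le_mul_of_nonneg_right h2 (Real.exp_pos _).le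
        _ = Real.exp (h (X ω, U ω)) := one_mul _
    refine ⟨(hMm.mul hexpAm).aestronglyMeasurable, ?_⟩
    have hkey : ∫⁻ ω, ENNReal.ofReal (M ω * Real.exp (-θ3 * A ω)) ∂μ
        ≤ ENNReal.ofReal (∫ ω, Real.exp (h (X ω, U ω)) ∂μ) := by
      have hsup : ∀ᵐ ω ∂μ, ENNReal.ofReal (M ω * Real.exp (-θ3 * A ω))
          = ⨆ n : ℕ, ENNReal.ofReal (F n ω * M ω) := by
        filter_upwards [hMbin] with ω hω
        rcases hω with hω | hω
        · simp [hω]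
        · simp only [hω, mul_one, one_mul]
          refine le_antisymm ?_ (iSup_le fun n => ENNReal.ofReal_le_ofReal (min_le_left _ _))
          refine le_iSup_of_le ⌈Real.exp (-θ3 * A ω)⌉₊ (le_of_eq ?_)
          rw [hFdef]
          simp only
          rw [min_eq_left (Nat.le_ceil _)]
      calc ∫⁻ ω, ENNReal.ofReal (M ω * Real.exp (-θ3 * A ω)) ∂μ
          = ∫⁻ ω, ⨆ n : ℕ, ENNReal.ofReal (F n ω * M ω) ∂μ := lintegral_congr_ae hsup
        _ = ⨆ n : ℕ, ∫⁻ ω, ENNReal.ofReal (F n ω * M ω) ∂μ := by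
            refine lintegral_iSup' (fun n => ?_) ?_
            · exact (ENNReal.measurable_ofReal.comp
                (((hFm n).mono hmAXU le_rfl).mul hMm)).aemeasurable
            · filter_upwards [hMbin] with ω hω
              intro i j hij
              refine ENNReal.ofReal_le_ofReal ?_
              have hM0 : 0 ≤ M ω := by rcases hω with hω | hω <;> simp [hω]
              refine mul_le_mul_of_nonneg_right ?_ hM0
              exact min_le_min le_rfl (Nat.cast_le.mpr hij)
        _ ≤ ENNReal.ofReal (∫ ω, Real.exp (h (X ω, U ω)) ∂μ) := by
            refine iSup_le fun n => ?_
            have hnn : 0 ≤ᵐ[μ] fun ω => F n ω * M ω := by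
              filter_upwards [hMbin] with ω hω
              have hM0 : 0 ≤ M ω := by rcases hω with hω | hω <;> simp [hω]
              exact mul_nonneg (hF0 n ω) hM0
            rw [← ofReal_integral_eq_lintegral_ofReal (hMF n) hnn]
            exact ENNReal.ofReal_le_ofReal (hle n)
    have hfin : ∫⁻ ω, ‖M ω * Real.exp (-θ3 * A ω)‖ₑ ∂μ
        = ∫⁻ ω, ENNReal.ofReal (M ω * Real.exp (-θ3 * A ω)) ∂μ := by
      refine lintegral_congr_ae ?_
      filter_upwards [hMbin] with ω hω
      have hM0 : 0 ≤ M ω := by rcases hω with hω | hω <;> simp [hω]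
      exact Real.enorm_eq_ofReal (mul_nonneg hM0 (Real.exp_pos _).le)
    rw [HasFiniteIntegral, hfin]
    exact lt_of_le_of_lt hkey ENNReal.ofReal_lt_top
  -- tower helpers
  have towerAll : ∀ {m' : MeasurableSpace Ω}, m' ≤ mM ⊔ (ma ⊔ (m0 ⊔ mu)) →
      ∀ {φ ξ : Ω → ℝ}, μ[φ|mM ⊔ (ma ⊔ (m0 ⊔ mu))] =ᵐ[μ] ξ → μ[φ|m'] =ᵐ[μ] μ[ξ|m'] := by
    intro m' hm' φ ξ hφξ
    exact (condExp_condExp_of_le hm' hmall).symm.trans (condExp_congr_ae hφξ)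
  have towerAXU : ∀ {m' : MeasurableSpace Ω}, m' ≤ ma ⊔ (m0 ⊔ mu) →
      ∀ {φ ξ : Ω → ℝ}, μ[φ|ma ⊔ (m0 ⊔ mu)] =ᵐ[μ] ξ → μ[φ|m'] =ᵐ[μ] μ[ξ|m'] := by
    intro m' hm' φ ξ hφξ
    exact (condExp_condExp_of_le hm' hmAXU).symm.trans (condExp_congr_ae hφξ)
  have towerXU : ∀ {m' : MeasurableSpace Ω}, m' ≤ m0 ⊔ mu →
      ∀ {φ ξ : Ω → ℝ}, μ[φ|m0 ⊔ mu] =ᵐ[μ] ξ → μ[φ|m'] =ᵐ[μ] μ[ξ|m'] := by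
    intro m' hm' φ ξ hφξ
    exact (condExp_condExp_of_le hm' hmXU).symm.trans (condExp_congr_ae hφξ)
  -- conditional expectation of ψ₃ given (A,X,U)
  have hstep3 : μ[(fun ω => M ω * Real.exp (-θ3 * A ω))|ma ⊔ (m0 ⊔ mu)] =ᵐ[μ]
      fun ω => Real.exp (h (X ω, U ω)) := by
    have hre : (fun ω => M ω * Real.exp (-θ3 * A ω))
        = fun ω => Real.exp (-θ3 * A ω) * M ω := by funext ω; ring
    rw [hre]
    have hpull := condExp_mul_of_stronglyMeasurable_left (m := ma ⊔ (m0 ⊔ mu)) (μ := μ)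
      (f := fun ω => Real.exp (-θ3 * A ω)) (g := M) hexpAma.stronglyMeasurable
      (by exact hψ3i.congr (Eventually.of_forall fun ω => mul_comm _ _)) hMi
    refine (EventuallyEq.trans (by exact hpull) ?_)
    filter_upwards [hmed] with ω hω
    simp only [Pi.mul_apply]
    rw [hω, ← Real.exp_add]
    congr 1
    ring
  refine ⟨?_, ?_, ?_⟩
  · -- component 1
    have hstep : μ[(fun ω => Y ω - θ1 * M ω - θ2 * A ω)|mM ⊔ (ma ⊔ (m0 ⊔ mu))] =ᵐ[μ]
        fun ω => g (X ω, U ω) := by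
      have hre : (fun ω => Y ω - θ1 * M ω - θ2 * A ω)
          = fun ω => Y ω - (θ1 * M ω + θ2 * A ω) := by funext ω; ring
      rw [hre]
      have h1 := condExp_sub (m := mM ⊔ (ma ⊔ (m0 ⊔ mu))) (μ := μ) (f := Y)
        (g := fun ω => θ1 * M ω + θ2 * A ω) hYi ((hMi.const_mul θ1).add (hAi.const_mul θ2))
      have h2 : μ[(fun ω => θ1 * M ω + θ2 * A ω)|mM ⊔ (ma ⊔ (m0 ⊔ mu))]
          = fun ω => θ1 * M ω + θ2 * A ω := by
        refine condExp_of_stronglyMeasurable hmall ?_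
          ((hMi.const_mul θ1).add (hAi.const_mul θ2))
        exact (((hMmM.mono hmM_all le_rfl).const_mul θ1).add
          ((hAma.mono hma_all le_rfl).const_mul θ2)).stronglyMeasurable
      refine (EventuallyEq.trans (by exact h1) ?_)
      rw [h2]
      filter_upwards [hout] with ω hω
      simp only [Pi.sub_apply]
      rw [hω]
      ring
    exact (towerAll hmaX_all hstep).trans ((KEY1 hgi hgSM).trans (towerAll hm0_all hstep).symm)
  · -- component 2
    have hψ2cong : (fun ω => (Y ω - θ1 * M ω) * (M ω * Real.exp (-θ3 * A ω) - htil ω)) =ᵐ[μ]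
        (fun ω => (Y ω - θ1 * M ω) * (M ω * Real.exp (-θ3 * A ω) - H ω)) := by
      filter_upwards [hhtil] with ω hω
      rw [hω]
    refine (condExp_congr_ae hψ2cong).trans (EventuallyEq.trans ?_
      (condExp_congr_ae hψ2cong).symm)
    by_cases hint : Integrable (fun ω => (Y ω - θ1 * M ω)
        * (M ω * Real.exp (-θ3 * A ω) - H ω)) μ
    swap
    · rw [condExp_of_not_integrable hint, condExp_of_not_integrable hint]
    have hYMi : Integrable (fun ω => Y ω - θ1 * M ω) μ := hYi.sub (hMi.const_mul θ1)
    have hqi : Integrable (fun ω => θ2 * A ω + g (X ω, U ω)) μ := (hAi.const_mul θ2).add hgi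
    have hKi : Integrable (fun ω => M ω * Real.exp (-θ3 * A ω) - H ω) μ := hψ3i.sub hHi
    have hK'i : Integrable (fun ω => Real.exp (h (X ω, U ω)) - H ω) μ := hhi.sub hHi
    have hK'SM : StronglyMeasurable[m0 ⊔ mu] (fun ω => Real.exp (h (X ω, U ω)) - H ω) :=
      hexpSM.sub (hHSM.mono hm0_XU)
    have hK'mΩ : StronglyMeasurable (fun ω => Real.exp (h (X ω, U ω)) - H ω) := hK'SM.mono hmXU
    have hAbar_i : Integrable (μ[A|m0]) μ := integrable_condExp
    have hAbar_SM : StronglyMeasurable[m0] (μ[A|m0]) := stronglyMeasurable_condExp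
    have hAbar_XU : μ[A|m0 ⊔ mu] =ᵐ[μ] μ[A|m0] :=
      KEY2 hAi ((hAma.mono hma_0a le_rfl).stronglyMeasurable)
    -- conditional expectations of K' vanish
    have hK'm0 : μ[(fun ω => Real.exp (h (X ω, U ω)) - H ω)|m0] =ᵐ[μ] fun _ => (0:ℝ) := by
      have h1 := condExp_sub (m := m0) (μ := μ) (f := fun ω => Real.exp (h (X ω, U ω)))
        (g := H) hhi hHi
      have h2 : μ[H|m0] = H := condExp_of_stronglyMeasurable hm0 hHSM hHi
      refine (EventuallyEq.trans (by exact h1) ?_)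
      rw [h2]
      refine EventuallyEq.of_eq ?_
      funext ω
      simp [hHdef]
    have hK'maX : μ[(fun ω => Real.exp (h (X ω, U ω)) - H ω)|ma ⊔ m0] =ᵐ[μ]
        fun _ => (0:ℝ) := by
      have h1 := condExp_sub (m := ma ⊔ m0) (μ := μ) (f := fun ω => Real.exp (h (X ω, U ω)))
        (g := H) hhi hHi
      have h2 : μ[H|ma ⊔ m0] = H :=
        condExp_of_stronglyMeasurable hmaX (hHSM.mono hm0_maX) hHi
      refine (EventuallyEq.trans (by exact h1) ?_)
      filter_upwards [KEY1 hhi hexpSM] with ω hω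
      simp only [Pi.sub_apply, h2]
      rw [hω, ← hHdef]
      simp
    -- step 1: condition on everything
    have s1 : μ[(fun ω => Y ω - θ1 * M ω)|mM ⊔ (ma ⊔ (m0 ⊔ mu))] =ᵐ[μ]
        fun ω => θ2 * A ω + g (X ω, U ω) := by
      have h1 := condExp_sub (m := mM ⊔ (ma ⊔ (m0 ⊔ mu))) (μ := μ) (f := Y)
        (g := fun ω => θ1 * M ω) hYi (hMi.const_mul θ1)
      have h2 : μ[(fun ω => θ1 * M ω)|mM ⊔ (ma ⊔ (m0 ⊔ mu))] = fun ω => θ1 * M ω :=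
        condExp_of_stronglyMeasurable hmall
          ((hMmM.mono hmM_all le_rfl).const_mul θ1).stronglyMeasurable (hMi.const_mul θ1)
      refine (EventuallyEq.trans (by exact h1) ?_)
      rw [h2]
      filter_upwards [hout] with ω hω
      simp only [Pi.sub_apply]
      rw [hω]
      ring
    have hexpAall : Measurable[mM ⊔ (ma ⊔ (m0 ⊔ mu))] (fun ω => Real.exp (-θ3 * A ω)) :=
      ((hAma.mono hma_all le_rfl).const_mul (-θ3)).exp
    have hKSMall : StronglyMeasurable[mM ⊔ (ma ⊔ (m0 ⊔ mu))]
        (fun ω => M ω * Real.exp (-θ3 * A ω) - H ω) :=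
      (((hMmM.mono hmM_all le_rfl).mul hexpAall).stronglyMeasurable).sub (hHSM.mono hm0_all)
    -- step 2
    have s2 : μ[(fun ω => (Y ω - θ1 * M ω) * (M ω * Real.exp (-θ3 * A ω) - H ω))|
        mM ⊔ (ma ⊔ (m0 ⊔ mu))] =ᵐ[μ]
        fun ω => (M ω * Real.exp (-θ3 * A ω) - H ω) * (θ2 * A ω + g (X ω, U ω)) := by
      have hre : (fun ω => (Y ω - θ1 * M ω) * (M ω * Real.exp (-θ3 * A ω) - H ω))
          = fun ω => (M ω * Real.exp (-θ3 * A ω) - H ω) * (Y ω - θ1 * M ω) := by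
        funext ω; ring
      rw [hre]
      have hpull := condExp_mul_of_stronglyMeasurable_left (m := mM ⊔ (ma ⊔ (m0 ⊔ mu))) (μ := μ)
        (f := fun ω => M ω * Real.exp (-θ3 * A ω) - H ω) (g := fun ω => Y ω - θ1 * M ω)
        hKSMall (by exact hint.congr (Eventually.of_forall fun ω => by simp only [Pi.mul_apply]; ring)) hYMi
      refine (EventuallyEq.trans (by exact hpull) ?_)
      filter_upwards [s1] with ω hω
      simp only [Pi.mul_apply]
      rw [hω]
    -- step 3
    have hqSM_AXU : StronglyMeasurable[ma ⊔ (m0 ⊔ mu)] (fun ω => θ2 * A ω + g (X ω, U ω)) :=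
      (((hAma.mono hma_AXU le_rfl).const_mul θ2).stronglyMeasurable).add (hgSM.mono le_sup_right)
    have hKq_i : Integrable
        (fun ω => (M ω * Real.exp (-θ3 * A ω) - H ω) * (θ2 * A ω + g (X ω, U ω))) μ :=
      integrable_condExp.congr s2
    have hK_AXU : μ[(fun ω => M ω * Real.exp (-θ3 * A ω) - H ω)|ma ⊔ (m0 ⊔ mu)] =ᵐ[μ]
        fun ω => Real.exp (h (X ω, U ω)) - H ω := by
      have h1 := condExp_sub (m := ma ⊔ (m0 ⊔ mu)) (μ := μ)
        (f := fun ω => M ω * Real.exp (-θ3 * A ω)) (g := H) hψ3i hHi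
      have h2 : μ[H|ma ⊔ (m0 ⊔ mu)] = H :=
        condExp_of_stronglyMeasurable hmAXU (hHSM.mono hm0_AXU) hHi
      refine (EventuallyEq.trans (by exact h1) ?_)
      filter_upwards [hstep3] with ω hω
      simp only [Pi.sub_apply, h2]
      rw [hω]
    have s3 : μ[(fun ω => (Y ω - θ1 * M ω) * (M ω * Real.exp (-θ3 * A ω) - H ω))|
        ma ⊔ (m0 ⊔ mu)] =ᵐ[μ]
        fun ω => (θ2 * A ω + g (X ω, U ω)) * (Real.exp (h (X ω, U ω)) - H ω) := by
      refine (towerAll hmAXU_all s2).trans ?_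
      have hre : (fun ω => (M ω * Real.exp (-θ3 * A ω) - H ω) * (θ2 * A ω + g (X ω, U ω)))
          = fun ω => (θ2 * A ω + g (X ω, U ω)) * (M ω * Real.exp (-θ3 * A ω) - H ω) := by
        funext ω; ring
      rw [hre]
      have hpull := condExp_mul_of_stronglyMeasurable_left (m := ma ⊔ (m0 ⊔ mu)) (μ := μ)
        (f := fun ω => θ2 * A ω + g (X ω, U ω))
        (g := fun ω => M ω * Real.exp (-θ3 * A ω) - H ω)
        hqSM_AXU (by exact hKq_i.congr (Eventually.of_forall fun ω => by simp only [Pi.mul_apply]; ring)) hKi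
      refine (EventuallyEq.trans (by exact hpull) ?_)
      filter_upwards [hK_AXU] with ω hω
      simp only [Pi.mul_apply]
      rw [hω]
    have hWi : Integrable
        (fun ω => (θ2 * A ω + g (X ω, U ω)) * (Real.exp (h (X ω, U ω)) - H ω)) μ :=
      integrable_condExp.congr s3
    -- step 5 : condition on m0 ⊔ mu
    have s5 : μ[(fun ω => (θ2 * A ω + g (X ω, U ω)) * (Real.exp (h (X ω, U ω)) - H ω))|
        m0 ⊔ mu] =ᵐ[μ]
        fun ω => (θ2 * (μ[A|m0]) ω + g (X ω, U ω)) * (Real.exp (h (X ω, U ω)) - H ω) := by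
      have hre : (fun ω => (θ2 * A ω + g (X ω, U ω)) * (Real.exp (h (X ω, U ω)) - H ω))
          = fun ω => (Real.exp (h (X ω, U ω)) - H ω) * (θ2 * A ω + g (X ω, U ω)) := by
        funext ω; ring
      rw [hre]
      have hpull := condExp_mul_of_stronglyMeasurable_left (m := m0 ⊔ mu) (μ := μ)
        (f := fun ω => Real.exp (h (X ω, U ω)) - H ω)
        (g := fun ω => θ2 * A ω + g (X ω, U ω))
        hK'SM (by exact hWi.congr (Eventually.of_forall fun ω => by simp only [Pi.mul_apply]; ring)) hqi
      refine (EventuallyEq.trans (by exact hpull) ?_)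
      have hq_XU : μ[(fun ω => θ2 * A ω + g (X ω, U ω))|m0 ⊔ mu] =ᵐ[μ]
          fun ω => θ2 * (μ[A|m0]) ω + g (X ω, U ω) := by
        have h1 := condExp_add (m := m0 ⊔ mu) (μ := μ) (f := fun ω => θ2 * A ω)
          (g := fun ω => g (X ω, U ω)) (hAi.const_mul θ2) hgi
        have h2 : μ[(fun ω => g (X ω, U ω))|m0 ⊔ mu] = fun ω => g (X ω, U ω) :=
          condExp_of_stronglyMeasurable hmXU hgSM hgi
        have h3 := condExp_smul (𝕜 := ℝ) (m := m0 ⊔ mu) (μ := μ) θ2 A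
        refine (EventuallyEq.trans (by exact h1) ?_)
        rw [h2]
        filter_upwards [h3, hAbar_XU] with ω h3ω hAω
        simp only [Pi.add_apply]
        congr 1
        have h4 : (μ[(fun ω => θ2 * A ω)|m0 ⊔ mu]) ω = θ2 * (μ[A|m0 ⊔ mu]) ω := by
          have h5 := h3ω
          simp only [Pi.smul_apply, smul_eq_mul] at h5
          exact h5
        rw [h4, hAω]
      filter_upwards [hq_XU] with ω hω
      simp only [Pi.mul_apply]
      rw [hω]
      ring
    have hWt_i : Integrable (fun ω => (θ2 * (μ[A|m0]) ω + g (X ω, U ω))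
        * (Real.exp (h (X ω, U ω)) - H ω)) μ := integrable_condExp.congr s5
    have hWtSM : StronglyMeasurable[m0 ⊔ mu] (fun ω => (θ2 * (μ[A|m0]) ω + g (X ω, U ω))
        * (Real.exp (h (X ω, U ω)) - H ω)) :=
      (((hAbar_SM.mono hm0_XU).const_mul θ2).add hgSM).mul hK'SM
    -- m0-side conclusion
    have s6 : μ[(fun ω => (Y ω - θ1 * M ω) * (M ω * Real.exp (-θ3 * A ω) - H ω))|m0] =ᵐ[μ]
        μ[(fun ω => (θ2 * (μ[A|m0]) ω + g (X ω, U ω))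
          * (Real.exp (h (X ω, U ω)) - H ω))|m0] :=
      (towerAXU hm0_AXU s3).trans (towerXU hm0_XU s5)
    -- maX-side
    have s7a : μ[(fun ω => (Y ω - θ1 * M ω) * (M ω * Real.exp (-θ3 * A ω) - H ω))|ma ⊔ m0]
        =ᵐ[μ] μ[(fun ω => (θ2 * A ω + g (X ω, U ω))
          * (Real.exp (h (X ω, U ω)) - H ω))|ma ⊔ m0] := towerAXU hmaX_AXU s3
    have s7b : μ[(fun ω => (θ2 * A ω + g (X ω, U ω)) * (Real.exp (h (X ω, U ω)) - H ω))|
        ma ⊔ m0] =ᵐ[μ] μ[(fun ω => (θ2 * (μ[A|m0]) ω + g (X ω, U ω))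
          * (Real.exp (h (X ω, U ω)) - H ω))|ma ⊔ m0] := by
      by_cases hθ2 : θ2 = 0
      · subst hθ2
        have hWW : (fun ω => ((0:ℝ) * A ω + g (X ω, U ω)) * (Real.exp (h (X ω, U ω)) - H ω))
            = fun ω => ((0:ℝ) * (μ[A|m0]) ω + g (X ω, U ω))
              * (Real.exp (h (X ω, U ω)) - H ω) := by
          funext ω; ring
        rw [hWW]
      · -- D := (A - Ā)·K′ is integrable and its cond. exp. on ma ⊔ m0 vanishes
        have hDi : Integrable (fun ω => (A ω - (μ[A|m0]) ω)
            * (Real.exp (h (X ω, U ω)) - H ω)) μ := by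
          refine ((hWi.sub hWt_i).const_mul θ2⁻¹).congr (Eventually.of_forall fun ω => ?_)
          simp only [Pi.sub_apply]
          field_simp
          ring
        have hzero : ∀ sx, MeasurableSet[m0] sx →
            ∫ ω in sx, (A ω - (μ[A|m0]) ω) * (Real.exp (h (X ω, U ω)) - H ω) ∂μ = 0 := by
          intro sx hsx
          have hsxΩ : MeasurableSet sx := hm0 sx hsx
          rw [Stmt17Aux.setIntegral_eq_integral_indicator_mul hsxΩ]
          have hre : (fun ω => sx.indicator (fun _ => (1:ℝ)) ω
              * ((A ω - (μ[A|m0]) ω) * (Real.exp (h (X ω, U ω)) - H ω)))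
              = fun ω => (sx.indicator (fun _ => (1:ℝ)) ω * (Real.exp (h (X ω, U ω)) - H ω))
                * (A ω - (μ[A|m0]) ω) := by
            funext ω; ring
          rw [hre]
          have hwSM : StronglyMeasurable[m0 ⊔ mu] (fun ω => sx.indicator (fun _ => (1:ℝ)) ω
              * (Real.exp (h (X ω, U ω)) - H ω)) :=
            (stronglyMeasurable_const.indicator (hm0_XU sx hsx)).mul hK'SM
          have hAAi : Integrable (fun ω => A ω - (μ[A|m0]) ω) μ := hAi.sub hAbar_i
          have hwgi : Integrable (fun ω => (sx.indicator (fun _ => (1:ℝ)) ω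
              * (Real.exp (h (X ω, U ω)) - H ω)) * (A ω - (μ[A|m0]) ω)) μ := by
            refine Integrable.mono' hDi.abs ?_ ?_
            · exact (((stronglyMeasurable_const.indicator hsxΩ).mul hK'mΩ).mul
                (hAm.stronglyMeasurable.sub (stronglyMeasurable_condExp.mono hm0))).aestronglyMeasurable
            · refine Eventually.of_forall fun ω => ?_
              by_cases hw : ω ∈ sx
              · simp only [indicator_of_mem hw, one_mul, Real.norm_eq_abs, abs_mul]
                rw [mul_comm]
              · simp [indicator_of_notMem hw, abs_nonneg]; positivity
          rw [Stmt17Aux.integral_mul_condexp hmXU hwSM hAAi hwgi]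
          have hcond0 : μ[(fun ω => A ω - (μ[A|m0]) ω)|m0 ⊔ mu] =ᵐ[μ] fun _ => (0:ℝ) := by
            have h1 := condExp_sub (m := m0 ⊔ mu) (μ := μ) (f := A) (g := μ[A|m0])
              hAi hAbar_i
            have h2 : μ[(μ[A|m0])|m0 ⊔ mu] = μ[A|m0] :=
              condExp_of_stronglyMeasurable hmXU (hAbar_SM.mono hm0_XU) hAbar_i
            refine (EventuallyEq.trans (by exact h1) ?_)
            filter_upwards [hAbar_XU] with ω hω
            simp only [Pi.sub_apply, h2]
            rw [hω]
            simp
          calc ∫ ω, (sx.indicator (fun _ => (1:ℝ)) ω * (Real.exp (h (X ω, U ω)) - H ω))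
                * (μ[(fun ω => A ω - (μ[A|m0]) ω)|m0 ⊔ mu]) ω ∂μ
              = ∫ ω, (0:ℝ) ∂μ := by
                refine integral_congr_ae ?_
                filter_upwards [hcond0] with ω hω
                rw [hω, mul_zero]
            _ = 0 := integral_zero _ _
        have hD0 : μ[(fun ω => (A ω - (μ[A|m0]) ω) * (Real.exp (h (X ω, U ω)) - H ω))|
            ma ⊔ m0] =ᵐ[μ] (fun _ => (0:ℝ)) := by
          have hgenD : ma ⊔ m0 = MeasurableSpace.generateFrom
              {r : Set Ω | ∃ (t : Set ℝ) (sx : Set Ω),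
                ((∃ c d : ℝ, t = Set.Ioo c d) ∨ t = Set.univ) ∧ MeasurableSet[m0] sx ∧
                r = A ⁻¹' t ∩ sx} := by
            refine le_antisymm (sup_le ?_ ?_) (MeasurableSpace.generateFrom_le ?_)
            · have hma_eq : ma = MeasurableSpace.generateFrom
                  ((fun S => A ⁻¹' S) '' (⋃ (a : ℚ) (b : ℚ) (_ : a < b), {Set.Ioo (a:ℝ) b})) := by
                rw [hmadef]
                conv_lhs => rw [show (inferInstance : MeasurableSpace ℝ) = borel ℝ from
                  BorelSpace.measurable_eq, Real.borel_eq_generateFrom_Ioo_rat,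
                  MeasurableSpace.comap_generateFrom]
              rw [hma_eq]
              refine MeasurableSpace.generateFrom_le ?_
              rintro _ ⟨S, hS, rfl⟩
              simp only [mem_iUnion, mem_singleton_iff] at hS
              obtain ⟨a, b, -, rfl⟩ := hS
              exact MeasurableSpace.measurableSet_generateFrom
                ⟨Set.Ioo (a:ℝ) b, Set.univ, Or.inl ⟨a, b, rfl⟩, MeasurableSet.univ,
                  (Set.inter_univ _).symm⟩
            · intro sx hsx
              exact MeasurableSpace.measurableSet_generateFrom
                ⟨Set.univ, sx, Or.inr rfl, hsx, by simp⟩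
            · rintro r ⟨t, sx, htt, hsx, rfl⟩
              have htm : MeasurableSet t := by
                rcases htt with ⟨c, d, rfl⟩ | rfl
                exacts [measurableSet_Ioo, MeasurableSet.univ]
              exact (hma_maX _ ⟨t, htm, rfl⟩).inter (hm0_maX _ hsx)
          have hpiD : IsPiSystem {r : Set Ω | ∃ (t : Set ℝ) (sx : Set Ω),
              ((∃ c d : ℝ, t = Set.Ioo c d) ∨ t = Set.univ) ∧ MeasurableSet[m0] sx ∧
              r = A ⁻¹' t ∩ sx} := by
            rintro r₁ ⟨t₁, s₁, ht₁, hs₁, rfl⟩ r₂ ⟨t₂, s₂, ht₂, hs₂, rfl⟩ -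
            refine ⟨t₁ ∩ t₂, s₁ ∩ s₂, ?_, hs₁.inter hs₂, ?_⟩
            · rcases ht₁ with ⟨a₁, b₁, rfl⟩ | rfl <;> rcases ht₂ with ⟨a₂, b₂, rfl⟩ | rfl
              · exact Or.inl ⟨a₁ ⊔ a₂, b₁ ⊓ b₂, Set.Ioo_inter_Ioo⟩
              · exact Or.inl ⟨a₁, b₁, by rw [Set.inter_univ]⟩
              · exact Or.inl ⟨a₂, b₂, by rw [Set.univ_inter]⟩
              · exact Or.inr (by rw [Set.univ_inter])
            · rw [Set.preimage_inter, Set.inter_inter_inter_comm]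
          refine Stmt17Aux.condexp_ae_eq_of_forall_setIntegral_pi hmaX hgenD hpiD hDi
            (integrable_const 0) stronglyMeasurable_const.aestronglyMeasurable ?_ ?_
          · simp only [integral_const, measure_univ, ENNReal.toReal_one, smul_eq_mul,
              mul_zero]
            have h0 := hzero Set.univ MeasurableSet.univ
            rwa [Measure.restrict_univ] at h0
          · rintro r ⟨t, sx, htt, hsx, rfl⟩
            have hRHS : ∫ ω in A ⁻¹' t ∩ sx, (fun _ => (0:ℝ)) ω ∂μ = 0 := by simp
            rw [hRHS]
            rcases htt with ⟨cc, dd, rfl⟩ | rfl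
            swap
            · rw [Set.preimage_univ, Set.univ_inter]
              exact hzero sx hsx
            -- Ioo case
            have hsaMa : MeasurableSet[ma] (A ⁻¹' Set.Ioo cc dd) := ⟨_, measurableSet_Ioo, rfl⟩
            have hsaΩ : MeasurableSet (A ⁻¹' Set.Ioo cc dd) := hma _ hsaMa
            have hsxΩ : MeasurableSet sx := hm0 sx hsx
            have hsΩ : MeasurableSet (A ⁻¹' Set.Ioo cc dd ∩ sx) := hsaΩ.inter hsxΩ
            have hsMaX : MeasurableSet[ma ⊔ m0] (A ⁻¹' Set.Ioo cc dd ∩ sx) :=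
              (hma_maX _ hsaMa).inter (hm0_maX _ hsx)
            have hp1i : Integrable (fun ω => (A ⁻¹' Set.Ioo cc dd ∩ sx).indicator A ω
                * (Real.exp (h (X ω, U ω)) - H ω)) μ := by
              refine Integrable.mono' (hK'i.abs.const_mul (max |cc| |dd|)) ?_ ?_
              · exact ((hAm.indicator hsΩ).stronglyMeasurable.mul hK'mΩ).aestronglyMeasurable
              · refine Eventually.of_forall fun ω => ?_
                rw [Real.norm_eq_abs, abs_mul]
                by_cases hw : ω ∈ A ⁻¹' Set.Ioo cc dd ∩ sx
                · have hA1 : |A ω| ≤ max |cc| |dd| := by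
                    have h1 := hw.1
                    simp only [mem_preimage, mem_Ioo] at h1
                    rw [abs_le]
                    constructor
                    · have := neg_abs_le cc
                      have := le_max_left |cc| |dd|
                      linarith [h1.1]
                    · have := le_abs_self dd
                      have := le_max_right |cc| |dd|
                      linarith [h1.2]
                  rw [indicator_of_mem hw]
                  exact mul_le_mul_of_nonneg_right hA1 (abs_nonneg _)
                · rw [indicator_of_notMem hw]
                  simp only [abs_zero, zero_mul]
                  exact mul_nonneg ((abs_nonneg cc).trans (le_max_left _ _)) (abs_nonneg _)
            have hp1SM : StronglyMeasurable[ma ⊔ m0]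
                ((A ⁻¹' Set.Ioo cc dd ∩ sx).indicator A) :=
              ((hAma.mono hma_maX le_rfl).indicator hsMaX).stronglyMeasurable
            have hp1 : ∫ ω, (A ⁻¹' Set.Ioo cc dd ∩ sx).indicator A ω
                * (Real.exp (h (X ω, U ω)) - H ω) ∂μ = 0 := by
              rw [Stmt17Aux.integral_mul_condexp hmaX hp1SM hK'i hp1i]
              calc ∫ ω, (A ⁻¹' Set.Ioo cc dd ∩ sx).indicator A ω
                    * (μ[(fun ω => Real.exp (h (X ω, U ω)) - H ω)|ma ⊔ m0]) ω ∂μ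
                  = ∫ ω, (0:ℝ) ∂μ := by
                    refine integral_congr_ae ?_
                    filter_upwards [hK'maX] with ω hω
                    rw [hω, mul_zero]
                _ = 0 := integral_zero _ _
            have hf₂SM : StronglyMeasurable[m0 ⊔ mu] (fun ω => sx.indicator (fun _ => (1:ℝ)) ω
                * ((μ[A|m0]) ω * (Real.exp (h (X ω, U ω)) - H ω))) :=
              (stronglyMeasurable_const.indicator (hm0_XU sx hsx)).mul
                ((hAbar_SM.mono hm0_XU).mul hK'SM)
            have hg₂i : Integrable ((A ⁻¹' Set.Ioo cc dd).indicator (fun _ => (1:ℝ))) μ :=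
              (integrable_const 1).indicator hsaΩ
            have hfg₂eq : ∀ ω, (sx.indicator (fun _ => (1:ℝ)) ω
                * ((μ[A|m0]) ω * (Real.exp (h (X ω, U ω)) - H ω)))
                * (A ⁻¹' Set.Ioo cc dd).indicator (fun _ => (1:ℝ)) ω
                = (A ⁻¹' Set.Ioo cc dd ∩ sx).indicator A ω * (Real.exp (h (X ω, U ω)) - H ω)
                  - (A ⁻¹' Set.Ioo cc dd ∩ sx).indicator (fun _ => (1:ℝ)) ω
                    * ((A ω - (μ[A|m0]) ω) * (Real.exp (h (X ω, U ω)) - H ω)) := by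
              intro ω
              by_cases h₁ : ω ∈ A ⁻¹' Set.Ioo cc dd <;> by_cases h₂ : ω ∈ sx <;>
                simp [h₁, h₂, Set.mem_inter_iff] <;> ring
            have hIDi : Integrable (fun ω =>
                (A ⁻¹' Set.Ioo cc dd ∩ sx).indicator (fun _ => (1:ℝ)) ω
                * ((A ω - (μ[A|m0]) ω) * (Real.exp (h (X ω, U ω)) - H ω))) μ := by
              refine Integrable.mono' hDi.abs ?_ ?_
              · exact ((stronglyMeasurable_const.indicator hsΩ).mul
                  ((hAm.stronglyMeasurable.sub (stronglyMeasurable_condExp.mono hm0)).mul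
                    hK'mΩ)).aestronglyMeasurable
              · refine Eventually.of_forall fun ω => ?_
                by_cases hw : ω ∈ A ⁻¹' Set.Ioo cc dd ∩ sx <;>
                  simp only [hw, Real.norm_eq_abs, abs_nonneg, abs_mul, indicator_of_mem,
                    indicator_of_notMem, not_false_iff, abs_zero, zero_mul, one_mul, abs_one,
                    le_refl, mul_nonneg, abs_nonneg]
            have hfg₂i : Integrable (fun ω => (sx.indicator (fun _ => (1:ℝ)) ω
                * ((μ[A|m0]) ω * (Real.exp (h (X ω, U ω)) - H ω)))
                * (A ⁻¹' Set.Ioo cc dd).indicator (fun _ => (1:ℝ)) ω) μ :=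
              (hp1i.sub hIDi).congr (Eventually.of_forall fun ω => (hfg₂eq ω).symm)
            have hp2 : ∫ ω, (sx.indicator (fun _ => (1:ℝ)) ω
                * ((μ[A|m0]) ω * (Real.exp (h (X ω, U ω)) - H ω)))
                * (A ⁻¹' Set.Ioo cc dd).indicator (fun _ => (1:ℝ)) ω ∂μ = 0 := by
              rw [Stmt17Aux.integral_mul_condexp hmXU hf₂SM hg₂i hfg₂i]
              have he₂ : μ[(A ⁻¹' Set.Ioo cc dd).indicator (fun _ => (1:ℝ))|m0 ⊔ mu] =ᵐ[μ]
                  μ[(A ⁻¹' Set.Ioo cc dd).indicator (fun _ => (1:ℝ))|m0] :=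
                KEY2 hg₂i (stronglyMeasurable_const.indicator (hma_0a _ hsaMa))
              have hpull := condExp_mul_of_stronglyMeasurable_left (m := m0 ⊔ mu) (μ := μ)
                (f := fun ω => sx.indicator (fun _ => (1:ℝ)) ω
                  * ((μ[A|m0]) ω * (Real.exp (h (X ω, U ω)) - H ω)))
                (g := (A ⁻¹' Set.Ioo cc dd).indicator (fun _ => (1:ℝ)))
                hf₂SM (by exact hfg₂i) hg₂i
              have hstep2 : ∫ ω, (sx.indicator (fun _ => (1:ℝ)) ω
                  * ((μ[A|m0]) ω * (Real.exp (h (X ω, U ω)) - H ω)))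
                  * (μ[(A ⁻¹' Set.Ioo cc dd).indicator (fun _ => (1:ℝ))|m0 ⊔ mu]) ω ∂μ
                  = ∫ ω, (sx.indicator (fun _ => (1:ℝ)) ω * (μ[A|m0]) ω
                    * (μ[(A ⁻¹' Set.Ioo cc dd).indicator (fun _ => (1:ℝ))|m0]) ω)
                    * (Real.exp (h (X ω, U ω)) - H ω) ∂μ := by
                refine integral_congr_ae ?_
                filter_upwards [he₂] with ω hω
                rw [hω]
                ring
              rw [hstep2]
              have hvSM : StronglyMeasurable[m0] (fun ω => sx.indicator (fun _ => (1:ℝ)) ω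
                  * (μ[A|m0]) ω
                  * (μ[(A ⁻¹' Set.Ioo cc dd).indicator (fun _ => (1:ℝ))|m0]) ω) :=
                ((stronglyMeasurable_const.indicator hsx).mul hAbar_SM).mul
                  stronglyMeasurable_condExp
              have hvK'i : Integrable (fun ω => (sx.indicator (fun _ => (1:ℝ)) ω
                  * (μ[A|m0]) ω
                  * (μ[(A ⁻¹' Set.Ioo cc dd).indicator (fun _ => (1:ℝ))|m0]) ω)
                  * (Real.exp (h (X ω, U ω)) - H ω)) μ := by
                refine (integrable_condExp.congr hpull).congr ?_
                filter_upwards [he₂] with ω hω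
                simp only [Pi.mul_apply]
                rw [hω]
                ring
              rw [Stmt17Aux.integral_mul_condexp hm0 hvSM hK'i hvK'i]
              calc ∫ ω, (sx.indicator (fun _ => (1:ℝ)) ω * (μ[A|m0]) ω
                    * (μ[(A ⁻¹' Set.Ioo cc dd).indicator (fun _ => (1:ℝ))|m0]) ω)
                    * (μ[(fun ω => Real.exp (h (X ω, U ω)) - H ω)|m0]) ω ∂μ
                  = ∫ ω, (0:ℝ) ∂μ := by
                    refine integral_congr_ae ?_
                    filter_upwards [hK'm0] with ω hω
                    rw [hω, mul_zero]
                _ = 0 := integral_zero _ _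
            rw [Stmt17Aux.setIntegral_eq_integral_indicator_mul hsΩ]
            calc ∫ ω, (A ⁻¹' Set.Ioo cc dd ∩ sx).indicator (fun _ => (1:ℝ)) ω
                  * ((A ω - (μ[A|m0]) ω) * (Real.exp (h (X ω, U ω)) - H ω)) ∂μ
                = ∫ ω, ((A ⁻¹' Set.Ioo cc dd ∩ sx).indicator A ω
                    * (Real.exp (h (X ω, U ω)) - H ω)
                  - (sx.indicator (fun _ => (1:ℝ)) ω
                    * ((μ[A|m0]) ω * (Real.exp (h (X ω, U ω)) - H ω)))
                    * (A ⁻¹' Set.Ioo cc dd).indicator (fun _ => (1:ℝ)) ω) ∂μ := by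
                  congr 1
                  funext ω
                  have := hfg₂eq ω
                  linarith
              _ = (∫ ω, (A ⁻¹' Set.Ioo cc dd ∩ sx).indicator A ω
                    * (Real.exp (h (X ω, U ω)) - H ω) ∂μ)
                  - ∫ ω, (sx.indicator (fun _ => (1:ℝ)) ω
                    * ((μ[A|m0]) ω * (Real.exp (h (X ω, U ω)) - H ω)))
                    * (A ⁻¹' Set.Ioo cc dd).indicator (fun _ => (1:ℝ)) ω ∂μ :=
                  integral_sub hp1i hfg₂i
              _ = 0 := by rw [hp1, hp2]; ring
        -- use hD0
        have hWdecomp : (fun ω => (θ2 * A ω + g (X ω, U ω))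
            * (Real.exp (h (X ω, U ω)) - H ω))
            = fun ω => (θ2 * (μ[A|m0]) ω + g (X ω, U ω)) * (Real.exp (h (X ω, U ω)) - H ω)
              + θ2 * ((A ω - (μ[A|m0]) ω) * (Real.exp (h (X ω, U ω)) - H ω)) := by
          funext ω; ring
        rw [hWdecomp]
        have h1 := condExp_add (m := ma ⊔ m0) (μ := μ)
          (f := fun ω => (θ2 * (μ[A|m0]) ω + g (X ω, U ω))
            * (Real.exp (h (X ω, U ω)) - H ω))
          (g := fun ω => θ2 * ((A ω - (μ[A|m0]) ω) * (Real.exp (h (X ω, U ω)) - H ω)))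
          hWt_i (hDi.const_mul θ2)
        refine (EventuallyEq.trans (by exact h1) ?_)
        have h2 := condExp_smul (𝕜 := ℝ) (m := ma ⊔ m0) (μ := μ) θ2
          (fun ω => (A ω - (μ[A|m0]) ω) * (Real.exp (h (X ω, U ω)) - H ω))
        have h3 : μ[(fun ω => θ2 * ((A ω - (μ[A|m0]) ω)
            * (Real.exp (h (X ω, U ω)) - H ω)))|ma ⊔ m0] =ᵐ[μ] fun _ => (0:ℝ) := by
          refine (EventuallyEq.trans (by exact h2) ?_)
          filter_upwards [hD0] with ω hω
          simp only [Pi.smul_apply, smul_eq_mul]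
          rw [hω, mul_zero]
        filter_upwards [h3] with ω hω
        simp only [Pi.add_apply]
        rw [hω, add_zero]
    exact (s7a.trans (s7b.trans (KEY1 hWt_i hWtSM))).trans s6.symm
  · -- component 3
    exact (towerAXU hmaX_AXU hstep3).trans
      ((KEY1 hhi hexpSM).trans (towerAXU hm0_AXU hstep3).symm)
end

section
/- Under the partially linear models and A ⊥ U | X, for any measurable 3-vector function d of X, the moment condition E[d(X)·(A−π(X))·ψ(O;θ,h*)^T] = 0 holds at the true θ, where ψ is the estimating function of Lemma 2.1 and π(X)=E(A|X). -/
open MeasureTheory ProbabilityTheory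

section AuxHelpers

variable {Ω : Type*}

/-- Product of two L² functions is integrable. -/
lemma aux_integrable_mul {mΩ : MeasurableSpace Ω} {μ : Measure Ω} {f g : Ω → ℝ}
    (hf : MemLp f 2 μ) (hg : MemLp g 2 μ) :
    Integrable (fun ω => f ω * g ω) μ := by
  have h := L2.integrable_inner (𝕜 := ℝ) (hf.toLp f) (hg.toLp g)
  have h1 : (fun ω => (inner ℝ ((hf.toLp f : Ω →₂[μ] ℝ) ω) ((hg.toLp g : Ω →₂[μ] ℝ) ω) : ℝ))
      =ᵐ[μ] fun ω => f ω * g ω := by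
    filter_upwards [hf.coeFn_toLp, hg.coeFn_toLp] with ω h1 h2
    simp [h1, h2, RCLike.inner_apply, starRingEnd_apply, mul_comm]
  exact h.congr h1

set_option maxHeartbeats 1000000 in
/-- The conditional expectation of an L² function is in L². -/
lemma aux_memL2_condexp {m mΩ : MeasurableSpace Ω} (hm : m ≤ mΩ)
    {μ : Measure Ω} [IsProbabilityMeasure μ] {f : Ω → ℝ} (hf : MemLp f 2 μ) :
    MemLp (μ[f|m]) 2 μ := by
  have hint : Integrable f μ := hf.integrable one_le_two
  set fLp : Lp ℝ 2 μ := hf.toLp f with hfLp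
  have hg_eq : (condExpL2 ℝ ℝ hm fLp : Ω → ℝ) =ᵐ[μ] μ[f|m] := by
    refine ae_eq_condExp_of_forall_setIntegral_eq hm hint
      (fun s hs hμs => integrableOn_condExpL2_of_measure_ne_top hm hμs.ne _)
      (fun s hs hμs => ?_) (aestronglyMeasurable_condExpL2 hm _)
    rw [integral_condExpL2_eq hm fLp hs hμs.ne]
    exact setIntegral_congr_ae (hm s hs) (hf.coeFn_toLp.mono fun ω hω _ => hω)
  have hgL2 : MemLp (condExpL2 ℝ ℝ hm fLp : Ω → ℝ) 2 μ := by
    exact Lp.memLp (condExpL2 ℝ ℝ hm fLp : Lp ℝ 2 μ)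
  exact hgL2.ae_eq hg_eq

end AuxHelpers

section AuxCore

open MeasureTheory ProbabilityTheory

variable {Ω : Type*}

set_option maxHeartbeats 1000000 in
/-- Under the conditional-independence product property, the set integral of an
`mA`-measurable integrable function over `t ∩ u` agrees with that of its `m'`-conditional
expectation. -/
lemma aux_setIntegral_eq {m' mA mΩ : MeasurableSpace Ω} (hm' : m' ≤ mΩ) (hA : mA ≤ mΩ)
    {μ : Measure Ω} [IsProbabilityMeasure μ]
    {t u : Set Ω} (ht : MeasurableSet[m'] t) (hu : MeasurableSet u)
    (hind : ∀ w, MeasurableSet[mA] w →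
      (μ⟦w ∩ u|m'⟧) =ᵐ[μ] (μ⟦w|m'⟧) * (μ⟦u|m'⟧))
    {f : Ω → ℝ} (hf : AEStronglyMeasurable[mA] f μ) (hfint : Integrable f μ) :
    ∫ x in t ∩ u, f x ∂μ = ∫ x in t ∩ u, (μ[f|m']) x ∂μ := by
  rw [← memLp_one_iff_integrable] at hfint
  refine MemLp.induction_stronglyMeasurable hA ENNReal.one_ne_top
    (fun f => ∫ x in t ∩ u, f x ∂μ = ∫ x in t ∩ u, (μ[f|m']) x ∂μ) ?_ ?_ ?_ ?_ hfint hf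
  · -- indicator case
    intro c w hw _
    have hw' : MeasurableSet w := hA w hw
    have hIu : Integrable (Set.indicator u fun _ => (1 : ℝ)) μ :=
      (integrable_const _).indicator hu
    have hmul_int : Integrable ((μ⟦w|m'⟧) * Set.indicator u fun _ => (1 : ℝ)) μ := by
      have heq : ((μ⟦w|m'⟧) * Set.indicator u fun _ => (1 : ℝ))
          = Set.indicator u (μ⟦w|m'⟧) := by
        funext ω; by_cases hω : ω ∈ u <;> simp [hω, Set.indicator_apply]
      rw [heq]
      exact integrable_condExp.indicator hu
    have hpull : μ[(μ⟦w|m'⟧) * Set.indicator u (fun _ => (1 : ℝ))|m'] =ᵐ[μ]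
        (μ⟦w|m'⟧) * (μ⟦u|m'⟧) :=
      condExp_mul_of_stronglyMeasurable_left stronglyMeasurable_condExp hmul_int hIu
    have hkey : ∫ x in t ∩ u, (μ⟦w|m'⟧) x ∂μ = (μ (t ∩ (w ∩ u))).toReal := by
      have e1 : ∫ x in t ∩ u, (μ⟦w|m'⟧) x ∂μ
          = ∫ x in t, Set.indicator u (μ⟦w|m'⟧) x ∂μ := (setIntegral_indicator hu).symm
      have e2 : ∫ x in t, Set.indicator u (μ⟦w|m'⟧) x ∂μ
          = ∫ x in t, ((μ⟦w|m'⟧) * Set.indicator u fun _ => (1 : ℝ)) x ∂μ := by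
        refine integral_congr_ae (Filter.Eventually.of_forall fun x => ?_)
        by_cases hx : x ∈ u <;> simp [hx, Set.indicator_apply]
      have e3 : ∫ x in t, ((μ⟦w|m'⟧) * Set.indicator u fun _ => (1 : ℝ)) x ∂μ
          = ∫ x in t, (μ[(μ⟦w|m'⟧) * Set.indicator u (fun _ => (1 : ℝ))|m']) x ∂μ :=
        (setIntegral_condExp hm' hmul_int ht).symm
      have e4 : ∫ x in t, (μ[(μ⟦w|m'⟧) * Set.indicator u (fun _ => (1 : ℝ))|m']) x ∂μ
          = ∫ x in t, (μ⟦w ∩ u|m'⟧) x ∂μ :=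
        integral_congr_ae (ae_restrict_of_ae (hpull.trans (hind w hw).symm))
      have e5 : ∫ x in t, (μ⟦w ∩ u|m'⟧) x ∂μ
          = ∫ x in t, Set.indicator (w ∩ u) (fun _ => (1 : ℝ)) x ∂μ :=
        setIntegral_condExp hm' ((integrable_const _).indicator (hw'.inter hu)) ht
      have e6 : ∫ x in t, Set.indicator (w ∩ u) (fun _ => (1 : ℝ)) x ∂μ
          = (μ (t ∩ (w ∩ u))).toReal := by
        rw [setIntegral_indicator (hw'.inter hu), setIntegral_const, smul_eq_mul, mul_one, measureReal_def]
      rw [e1, e2, e3, e4, e5, e6]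
    have hker : Set.indicator w (fun _ => c) = c • Set.indicator w fun _ => (1 : ℝ) := by
      funext ω; by_cases hω : ω ∈ w <;> simp [hω, Set.indicator_apply]
    calc ∫ x in t ∩ u, Set.indicator w (fun _ => c) x ∂μ
        = (μ (t ∩ u ∩ w)).toReal • c := by
          rw [setIntegral_indicator hw', setIntegral_const, measureReal_def]
      _ = (μ (t ∩ (w ∩ u))).toReal • c := by
          rw [Set.inter_assoc, Set.inter_comm u w]
      _ = ∫ x in t ∩ u, (c • (μ⟦w|m'⟧)) x ∂μ := by
          simp only [Pi.smul_apply]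
          rw [integral_smul, hkey, smul_eq_mul, smul_eq_mul, mul_comm]
      _ = ∫ x in t ∩ u, (μ[Set.indicator w (fun _ => c)|m']) x ∂μ := by
          refine integral_congr_ae (ae_restrict_of_ae ?_)
          rw [hker]
          exact (condExp_smul c (Set.indicator w fun _ => (1 : ℝ)) m').symm
  · -- additivity
    intro f g _ hfi hgi _ _ hfe hge
    rw [memLp_one_iff_integrable] at hfi hgi
    rw [integral_add' hfi.integrableOn hgi.integrableOn, hfe, hge]
    have hcongr : ∫ x in t ∩ u, (μ[f + g|m']) x ∂μ
        = ∫ x in t ∩ u, ((μ[f|m']) + (μ[g|m'])) x ∂μ :=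
      integral_congr_ae (ae_restrict_of_ae (condExp_add hfi hgi _))
    rw [hcongr, integral_add' integrable_condExp.integrableOn integrable_condExp.integrableOn]
  · -- closedness
    have heq₁ : (fun f : lpMeas ℝ ℝ mA 1 μ => ∫ x in t ∩ u, (f : Ω → ℝ) x ∂μ) =
        (fun f : Lp ℝ 1 μ => ∫ x in t ∩ u, f x ∂μ) ∘ Submodule.subtypeL _ := by
      refine funext fun f => integral_congr_ae (ae_restrict_of_ae ?_)
      simp_rw [Submodule.coe_subtypeL', Submodule.coe_subtype]
      exact Filter.Eventually.of_forall fun _ => by trivial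
    have heq₂ : (fun f : lpMeas ℝ ℝ mA 1 μ => ∫ x in t ∩ u, (μ[(f : Ω → ℝ)|m']) x ∂μ) =
        ((fun f : Lp ℝ 1 μ => ∫ x in t ∩ u, f x ∂μ) ∘ (condExpL1CLM ℝ hm' μ)) ∘
          Submodule.subtypeL _ := by
      refine funext fun f => ?_
      simp only [Function.comp_apply, Submodule.coe_subtypeL', Submodule.coe_subtype]
      refine integral_congr_ae (ae_restrict_of_ae ?_)
      have h1 := condExp_ae_eq_condExpL1CLM hm' (L1.integrable_coeFn (f : Lp ℝ 1 μ))
      rwa [Integrable.toL1_coeFn] at h1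
    refine isClosed_eq ?_ ?_
    · rw [heq₁]
      exact (continuous_setIntegral _).comp (ContinuousLinearMap.continuous _)
    · rw [heq₂]
      exact ((continuous_setIntegral _).comp (condExpL1CLM ℝ hm' μ).continuous).comp
        (ContinuousLinearMap.continuous _)
  · -- a.e. congruence
    intro f g hfg _ hPf
    have h1 : ∫ x in t ∩ u, g x ∂μ = ∫ x in t ∩ u, f x ∂μ :=
      integral_congr_ae (ae_restrict_of_ae hfg.symm)
    have h2 : ∫ x in t ∩ u, (μ[g|m']) x ∂μ = ∫ x in t ∩ u, (μ[f|m']) x ∂μ :=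
      integral_congr_ae (ae_restrict_of_ae (condExp_congr_ae hfg.symm))
    rw [h1, h2]
    exact hPf

end AuxCore

section AuxSup

open MeasureTheory ProbabilityTheory

variable {Ω : Type*}

set_option maxHeartbeats 1000000 in
/-- If the σ-algebras `mA` and `mU` are conditionally independent given `m'` (expressed via the
product property for conditional expectations of indicators), then conditioning an
`mA`-measurable function on `m' ⊔ mU` is the same as conditioning on `m'`. -/
lemma aux_condexp_sup {m' mA mU mΩ : MeasurableSpace Ω} (hm' : m' ≤ mΩ) (hA : mA ≤ mΩ)
    (hU : mU ≤ mΩ) {μ : Measure Ω} [IsProbabilityMeasure μ]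
    (hind : ∀ w u, MeasurableSet[mA] w → MeasurableSet[mU] u →
      (μ⟦w ∩ u|m'⟧) =ᵐ[μ] (μ⟦w|m'⟧) * (μ⟦u|m'⟧))
    {f : Ω → ℝ} (hf : AEStronglyMeasurable[mA] f μ) (hfint : Integrable f μ) :
    μ[f|m' ⊔ mU] =ᵐ[μ] μ[f|m'] := by
  have hsup : m' ⊔ mU ≤ mΩ := sup_le hm' hU
  have hgen : (m' ⊔ mU) = MeasurableSpace.generateFrom
      {s | ∃ t u, MeasurableSet[m'] t ∧ MeasurableSet[mU] u ∧ s = t ∩ u} := by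
    apply le_antisymm
    · refine sup_le ?_ ?_
      · intro s hs
        exact MeasurableSpace.measurableSet_generateFrom
          ⟨s, Set.univ, hs, MeasurableSet.univ, (Set.inter_univ s).symm⟩
      · intro s hs
        exact MeasurableSpace.measurableSet_generateFrom
          ⟨Set.univ, s, MeasurableSet.univ, hs, (Set.univ_inter s).symm⟩
    · refine MeasurableSpace.generateFrom_le ?_
      rintro s ⟨t, u, ht, hu, rfl⟩
      exact ((le_sup_left : m' ≤ m' ⊔ mU) t ht).inter ((le_sup_right : mU ≤ m' ⊔ mU) u hu)
  have hpi : IsPiSystem {s : Set Ω | ∃ t u, MeasurableSet[m'] t ∧ MeasurableSet[mU] u ∧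
      s = t ∩ u} := by
    rintro s1 ⟨t1, u1, ht1, hu1, rfl⟩ s2 ⟨t2, u2, ht2, hu2, rfl⟩ _
    refine ⟨t1 ∩ t2, u1 ∩ u2, ht1.inter ht2, hu1.inter hu2, ?_⟩
    ext x
    simp only [Set.mem_inter_iff]
    tauto
  have key : ∀ s, MeasurableSet[m' ⊔ mU] s →
      ∫ x in s, (μ[f|m']) x ∂μ = ∫ x in s, f x ∂μ := by
    intro s hs
    refine @MeasurableSpace.induction_on_inter Ω (m' ⊔ mU)
      (fun s _ => ∫ x in s, (μ[f|m']) x ∂μ = ∫ x in s, f x ∂μ) _ hgen hpi ?_ ?_ ?_ ?_ s hs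
    · simp
    · rintro s ⟨t, u, ht, hu, rfl⟩
      exact (aux_setIntegral_eq hm' hA ht (hU u hu) (fun w hw => hind w u hw hu) hf hfint).symm
    · intro s hsm hC
      have hs' : MeasurableSet s := hsup s hsm
      have h1 := integral_add_compl (μ := μ) hs' (integrable_condExp (μ := μ) (f := f) (m := m'))
      have h2 := integral_add_compl hs' hfint
      have h3 : ∫ x, (μ[f|m']) x ∂μ = ∫ x, f x ∂μ := integral_condExp hm'
      linarith
    · intro g hdisj hmeas hC
      rw [integral_iUnion (fun i => hsup _ (hmeas i)) hdisj integrable_condExp.integrableOn,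
        integral_iUnion (fun i => hsup _ (hmeas i)) hdisj hfint.integrableOn]
      exact tsum_congr hC
  refine (ae_eq_condExp_of_forall_setIntegral_eq hsup hfint
    (fun s _ _ => integrable_condExp.integrableOn) (fun s hs _ => key s hs)
    ((stronglyMeasurable_condExp.mono (le_sup_left : m' ≤ m' ⊔ mU)).aestronglyMeasurable)).symm

end AuxSup

section AuxStep

open MeasureTheory ProbabilityTheory

variable {Ω : Type*}

/-- Tower-property step: replace the integrable factor by (a version of) its conditional
expectation inside an integral against an `n`-measurable factor. -/
lemma aux_step {n mΩ : MeasurableSpace Ω} (hn : n ≤ mΩ)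
    {μ : Measure Ω} [IsProbabilityMeasure μ] {F G G' : Ω → ℝ}
    (hF : StronglyMeasurable[n] F) (hFG : Integrable (fun ω => F ω * G ω) μ)
    (hG : Integrable G μ) (hG' : μ[G|n] =ᵐ[μ] G') :
    ∫ ω, F ω * G ω ∂μ = ∫ ω, F ω * G' ω ∂μ ∧ Integrable (fun ω => F ω * G' ω) μ := by
  have hFG' : Integrable (F * G) μ := hFG
  have h1 : μ[F * G|n] =ᵐ[μ] F * μ[G|n] := condExp_mul_of_stronglyMeasurable_left hF hFG' hG
  have h2 : μ[F * G|n] =ᵐ[μ] fun ω => F ω * G' ω := by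
    filter_upwards [h1, hG'] with ω hω1 hω2
    rw [hω1, Pi.mul_apply, hω2]
  constructor
  · calc ∫ ω, F ω * G ω ∂μ = ∫ ω, (μ[F * G|n]) ω ∂μ := (integral_condExp hn).symm
      _ = ∫ ω, F ω * G' ω ∂μ := integral_congr_ae h2
  · exact integrable_condExp.congr h2

end AuxStep

set_option maxHeartbeats 2000000 in
/-- under the partially linear models and `A ⊥ U | X`, for any measurable
3-vector function `d` of `X`, the moment condition
`E[d(X)·(A − π(X))·ψ(O;θ,h*)ᵀ] = 0` holds at the true `θ`, where `ψ` is the estimating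
function of Lemma 2.1 and `π(X) = E(A|X)`. -/
theorem stmt18 {Ω 𝓧 𝓤 : Type*} {mΩ : MeasurableSpace Ω} [StandardBorelSpace Ω] [Nonempty Ω]
    {m𝓧 : MeasurableSpace 𝓧} {m𝓤 : MeasurableSpace 𝓤}
    (μ : Measure Ω) [IsProbabilityMeasure μ]
    (Y A M : Ω → ℝ) (X : Ω → 𝓧) (U : Ω → 𝓤)
    (hYm : Measurable Y) (hAm : Measurable A) (hMm : Measurable M)
    (hXm : Measurable X) (hUm : Measurable U)
    (hY : MemLp Y 2 μ) (hA : MemLp A 2 μ) (hM : MemLp M 2 μ)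
    (θ1 θ2 θ3 : ℝ) (g h : 𝓧 × 𝓤 → ℝ) (hg : Measurable g) (hh : Measurable h)
    (hgi : MemLp (fun ω => g (X ω, U ω)) 2 μ)
    (hhi : MemLp (fun ω => h (X ω, U ω)) 2 μ)
    (hout : μ[Y | MeasurableSpace.comap (fun ω => (M ω, A ω, X ω, U ω)) inferInstance]
        =ᵐ[μ] fun ω => θ1 * M ω + θ2 * A ω + g (X ω, U ω))
    (hmed : μ[M | MeasurableSpace.comap (fun ω => (A ω, X ω, U ω)) inferInstance]
        =ᵐ[μ] fun ω => θ3 * A ω + h (X ω, U ω))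
    (hAU : CondIndepFun (MeasurableSpace.comap X m𝓧) hXm.comap_le A U μ)
    (piX hstar : Ω → ℝ)
    (hpiX : piX =ᵐ[μ] μ[A | MeasurableSpace.comap X m𝓧])
    (hhstar : hstar =ᵐ[μ] μ[fun ω => h (X ω, U ω) | MeasurableSpace.comap X m𝓧])
    (d : 𝓧 → Fin 3 → ℝ) (hd : ∀ i, Measurable (fun x => d x i))
    (hint1 : ∀ i : Fin 3, Integrable
      (fun ω => d (X ω) i * (A ω - piX ω) * (Y ω - θ1 * M ω - θ2 * A ω)) μ)
    (hint2 : ∀ i : Fin 3, Integrable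
      (fun ω => d (X ω) i * (A ω - piX ω)
        * ((M ω - θ3 * A ω - hstar ω) * (Y ω - θ1 * M ω))) μ)
    (hint3 : ∀ i : Fin 3, Integrable
      (fun ω => d (X ω) i * (A ω - piX ω) * (M ω - θ3 * A ω)) μ) :
    ∀ i : Fin 3,
      (∫ ω, d (X ω) i * (A ω - piX ω) * (Y ω - θ1 * M ω - θ2 * A ω) ∂μ = 0)
      ∧ (∫ ω, d (X ω) i * (A ω - piX ω)
          * ((M ω - θ3 * A ω - hstar ω) * (Y ω - θ1 * M ω)) ∂μ = 0)
      ∧ (∫ ω, d (X ω) i * (A ω - piX ω) * (M ω - θ3 * A ω) ∂μ = 0) := by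
  intro i
  -- σ-algebras
  set m := MeasurableSpace.comap X m𝓧 with hm_def
  have hmle : m ≤ mΩ := hXm.comap_le
  set mUalg := MeasurableSpace.comap U m𝓤 with hmU_def
  have hUle : mUalg ≤ mΩ := hUm.comap_le
  have hm2le : m ⊔ mUalg ≤ mΩ := sup_le hmle hUle
  have htuple1 : Measurable[mΩ] fun ω => (M ω, A ω, X ω, U ω) :=
    hMm.prodMk (hAm.prodMk (hXm.prodMk hUm))
  have htuple3 : Measurable[mΩ] fun ω => (A ω, X ω, U ω) := hAm.prodMk (hXm.prodMk hUm)
  set n1 := MeasurableSpace.comap (fun ω => (M ω, A ω, X ω, U ω))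
    (inferInstance : MeasurableSpace (ℝ × ℝ × 𝓧 × 𝓤)) with hn1_def
  set n3 := MeasurableSpace.comap (fun ω => (A ω, X ω, U ω))
    (inferInstance : MeasurableSpace (ℝ × 𝓧 × 𝓤)) with hn3_def
  have hn1le : n1 ≤ mΩ := htuple1.comap_le
  have hn3le : n3 ≤ mΩ := htuple3.comap_le
  have ht1 : Measurable[n1] fun ω => (M ω, A ω, X ω, U ω) := measurable_iff_comap_le.mpr le_rfl
  have ht3 : Measurable[n3] fun ω => (A ω, X ω, U ω) := measurable_iff_comap_le.mpr le_rfl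
  have hM_n1 : Measurable[n1] M := measurable_fst.comp ht1
  have hA_n1 : Measurable[n1] A := measurable_fst.comp (measurable_snd.comp ht1)
  have hX_n1 : Measurable[n1] X :=
    measurable_fst.comp (measurable_snd.comp (measurable_snd.comp ht1))
  have hU_n1 : Measurable[n1] U :=
    measurable_snd.comp (measurable_snd.comp (measurable_snd.comp ht1))
  have hA_n3 : Measurable[n3] A := measurable_fst.comp ht3
  have hX_n3 : Measurable[n3] X := measurable_fst.comp (measurable_snd.comp ht3)
  have hU_n3 : Measurable[n3] U := measurable_snd.comp (measurable_snd.comp ht3)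
  have hm_le_n1 : m ≤ n1 := measurable_iff_comap_le.mp hX_n1
  have hm_le_n3 : m ≤ n3 := measurable_iff_comap_le.mp hX_n3
  have hX_m : Measurable[m] X := measurable_iff_comap_le.mpr le_rfl
  have hU_mU : Measurable[mUalg] U := measurable_iff_comap_le.mpr le_rfl
  have hX_m2 : Measurable[m ⊔ mUalg] X := hX_m.mono le_sup_left le_rfl
  have hU_m2 : Measurable[m ⊔ mUalg] U := hU_mU.mono le_sup_right le_rfl
  -- base random variables
  set gXU := fun ω => g (X ω, U ω) with hgXU_def
  set hXU := fun ω => h (X ω, U ω) with hhXU_def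
  have hg_m2 : Measurable[m ⊔ mUalg] gXU := hg.comp (hX_m2.prodMk hU_m2)
  have hh_m2 : Measurable[m ⊔ mUalg] hXU := hh.comp (hX_m2.prodMk hU_m2)
  have hg_n1 : Measurable[n1] gXU := hg.comp (hX_n1.prodMk hU_n1)
  have hg_n3 : Measurable[n3] gXU := hg.comp (hX_n3.prodMk hU_n3)
  have hh_n3 : Measurable[n3] hXU := hh.comp (hX_n3.prodMk hU_n3)
  -- integrability (L¹)
  have iY : Integrable Y μ := hY.integrable one_le_two
  have iA : Integrable A μ := hA.integrable one_le_two
  have iM : Integrable M μ := hM.integrable one_le_two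
  have ig : Integrable gXU μ := hgi.integrable one_le_two
  have ih : Integrable hXU μ := hhi.integrable one_le_two
  have iMth1 : Integrable (fun ω => θ1 * M ω) μ := iM.const_mul θ1
  have iAth2 : Integrable (fun ω => θ2 * A ω) μ := iA.const_mul θ2
  have iAth3 : Integrable (fun ω => θ3 * A ω) μ := iA.const_mul θ3
  have ilin1 : Integrable (fun ω => θ1 * M ω + θ2 * A ω) μ := iMth1.add iAth2
  -- conditional expectations given X
  set piC := μ[A|m] with hpi_def
  set hsC := μ[hXU|m] with hhs_def
  have hpiC_sm : StronglyMeasurable[m] piC := stronglyMeasurable_condExp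
  have hhsC_sm : StronglyMeasurable[m] hsC := stronglyMeasurable_condExp
  have ipi : Integrable piC μ := integrable_condExp
  have ihs : Integrable hsC μ := integrable_condExp
  have hpiL2 : MemLp piC 2 μ := aux_memL2_condexp hmle hA
  -- conditional independence consequences
  have hA_cm : Measurable[MeasurableSpace.comap A inferInstance] A :=
    measurable_iff_comap_le.mpr le_rfl
  have hind := (condIndepFun_iff m hmle A U hAm hUm μ).mp hAU
  have hPA : μ[A|m ⊔ mUalg] =ᵐ[μ] piC :=
    aux_condexp_sup hmle hAm.comap_le hUle hind
      hA_cm.stronglyMeasurable.aestronglyMeasurable iA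
  have hPA2 : μ[(fun ω => A ω * A ω)|m ⊔ mUalg] =ᵐ[μ] μ[(fun ω => A ω * A ω)|m] :=
    aux_condexp_sup hmle hAm.comap_le hUle hind
      (hA_cm.mul hA_cm).stronglyMeasurable.aestronglyMeasurable (aux_integrable_mul hA hA)
  set Q := μ[(fun ω => A ω * A ω)|m] with hQ_def
  have hQ_sm : StronglyMeasurable[m] Q := stronglyMeasurable_condExp
  -- A - piC has zero conditional expectation given (X, U)
  have hApi0 : μ[(fun ω => A ω - piC ω)|m ⊔ mUalg] =ᵐ[μ] fun _ => (0 : ℝ) := by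
    have h0 : (fun ω => A ω - piC ω) = A - piC := rfl
    rw [h0]
    refine (condExp_sub iA ipi _).trans ?_
    rw [condExp_of_stronglyMeasurable hm2le (hpiC_sm.mono le_sup_left) ipi]
    filter_upwards [hPA] with ω hω
    simp [hω]
  -- hXU - hsC has zero conditional expectation given X
  have hhbar0 : μ[(fun ω => hXU ω - hsC ω)|m] =ᵐ[μ] fun _ => (0 : ℝ) := by
    have h0 : (fun ω => hXU ω - hsC ω) = hXU - hsC := rfl
    rw [h0]
    refine (condExp_sub ih ihs _).trans ?_
    rw [condExp_of_stronglyMeasurable hmle hhsC_sm ihs]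
    filter_upwards with ω
    simp [hhs_def]
  -- conditional expectation computations from the models
  have hcY1 : μ[(fun ω => Y ω - θ1 * M ω - θ2 * A ω)|n1] =ᵐ[μ] gXU := by
    have hsplit : (fun ω => Y ω - θ1 * M ω - θ2 * A ω)
        = Y - fun ω => θ1 * M ω + θ2 * A ω := by funext ω; simp; ring
    rw [hsplit]
    refine (condExp_sub iY ilin1 _).trans ?_
    have hsmlin : StronglyMeasurable[n1] fun ω => θ1 * M ω + θ2 * A ω :=
      ((hM_n1.const_mul θ1).add (hA_n1.const_mul θ2)).stronglyMeasurable
    rw [condExp_of_stronglyMeasurable hn1le hsmlin ilin1]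
    filter_upwards [hout] with ω hω
    simp only [Pi.sub_apply]
    rw [hω]
    simp only [hgXU_def]
    ring
  have hcY2 : μ[(fun ω => Y ω - θ1 * M ω)|n1] =ᵐ[μ] fun ω => θ2 * A ω + gXU ω := by
    have hsplit : (fun ω => Y ω - θ1 * M ω) = Y - fun ω => θ1 * M ω := rfl
    rw [hsplit]
    refine (condExp_sub iY iMth1 _).trans ?_
    have hsmlin : StronglyMeasurable[n1] fun ω => θ1 * M ω :=
      (hM_n1.const_mul θ1).stronglyMeasurable
    rw [condExp_of_stronglyMeasurable hn1le hsmlin iMth1]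
    filter_upwards [hout] with ω hω
    simp only [Pi.sub_apply]
    rw [hω]
    simp only [hgXU_def]
    ring
  have hcM3 : μ[(fun ω => M ω - θ3 * A ω)|n3] =ᵐ[μ] hXU := by
    have hsplit : (fun ω => M ω - θ3 * A ω) = M - fun ω => θ3 * A ω := rfl
    rw [hsplit]
    refine (condExp_sub iM iAth3 _).trans ?_
    have hsmlin : StronglyMeasurable[n3] fun ω => θ3 * A ω :=
      (hA_n3.const_mul θ3).stronglyMeasurable
    rw [condExp_of_stronglyMeasurable hn3le hsmlin iAth3]
    filter_upwards [hmed] with ω hω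
    simp only [Pi.sub_apply]
    rw [hω]
    simp only [hhXU_def]
    ring
  have hcM2 : μ[(fun ω => M ω - θ3 * A ω - hsC ω)|n3] =ᵐ[μ] fun ω => hXU ω - hsC ω := by
    have hsplit : (fun ω => M ω - θ3 * A ω - hsC ω)
        = M - fun ω => θ3 * A ω + hsC ω := by funext ω; simp; ring
    rw [hsplit]
    have ilin4 : Integrable (fun ω => θ3 * A ω + hsC ω) μ := iAth3.add ihs
    refine (condExp_sub iM ilin4 _).trans ?_
    have hsmlin : StronglyMeasurable[n3] fun ω => θ3 * A ω + hsC ω :=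
      ((hA_n3.const_mul θ3).stronglyMeasurable).add (hhsC_sm.mono hm_le_n3)
    rw [condExp_of_stronglyMeasurable hn3le hsmlin ilin4]
    filter_upwards [hmed] with ω hω
    simp only [Pi.sub_apply]
    rw [hω]
    simp only [hhXU_def]
    ring
  -- the key computation for the second component
  have hL2sum : MemLp (fun ω => θ2 * A ω + gXU ω) 2 μ := (hA.const_mul θ2).add hgi
  have isum : Integrable (fun ω => θ2 * A ω + gXU ω) μ := iAth2.add ig
  have iT1 : Integrable (fun ω => A ω * (θ2 * A ω + gXU ω)) μ := aux_integrable_mul hA hL2sum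
  have iT2 : Integrable (fun ω => piC ω * (θ2 * A ω + gXU ω)) μ :=
    aux_integrable_mul hpiL2 hL2sum
  have iAA : Integrable (fun ω => A ω * A ω) μ := aux_integrable_mul hA hA
  have igA : Integrable (fun ω => gXU ω * A ω) μ := aux_integrable_mul hgi hA
  have hT1 : μ[(fun ω => A ω * (θ2 * A ω + gXU ω))|m ⊔ mUalg] =ᵐ[μ]
      fun ω => θ2 * Q ω + gXU ω * piC ω := by
    have hsplit : (fun ω => A ω * (θ2 * A ω + gXU ω))
        = (fun ω => θ2 * (A ω * A ω)) + fun ω => gXU ω * A ω := by funext ω; simp; ring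
    rw [hsplit]
    have iAAth2 : Integrable (fun ω => θ2 * (A ω * A ω)) μ := iAA.const_mul θ2
    refine (condExp_add iAAth2 igA _).trans ?_
    have e1 : μ[(fun ω => θ2 * (A ω * A ω))|m ⊔ mUalg] =ᵐ[μ] fun ω => θ2 * Q ω := by
      have hsm : (fun ω => θ2 * (A ω * A ω)) = θ2 • fun ω => A ω * A ω := by
        funext ω; simp [smul_eq_mul]
      rw [hsm]
      refine (condExp_smul θ2 _ (m ⊔ mUalg)).trans ?_
      filter_upwards [hPA2] with ω hω
      simp only [Pi.smul_apply, smul_eq_mul]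
      rw [hω]
    have e2 : μ[(fun ω => gXU ω * A ω)|m ⊔ mUalg] =ᵐ[μ] fun ω => gXU ω * piC ω := by
      have h := condExp_mul_of_stronglyMeasurable_left (m := m ⊔ mUalg) (μ := μ)
        hg_m2.stronglyMeasurable (f := gXU) (g := A) igA iA
      refine h.trans ?_
      filter_upwards [hPA] with ω hω
      simp only [Pi.mul_apply]
      rw [hω]
    filter_upwards [e1, e2] with ω h1 h2
    simp only [Pi.add_apply]
    rw [h1, h2]
  have hT2 : μ[(fun ω => piC ω * (θ2 * A ω + gXU ω))|m ⊔ mUalg] =ᵐ[μ]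
      fun ω => piC ω * (θ2 * piC ω + gXU ω) := by
    have h := condExp_mul_of_stronglyMeasurable_left (m := m ⊔ mUalg) (μ := μ)
      (hpiC_sm.mono le_sup_left) (f := piC) (g := fun ω => θ2 * A ω + gXU ω) iT2 isum
    refine h.trans ?_
    have hsum : μ[(fun ω => θ2 * A ω + gXU ω)|m ⊔ mUalg] =ᵐ[μ]
        fun ω => θ2 * piC ω + gXU ω := by
      have hsplit : (fun ω => θ2 * A ω + gXU ω) = (fun ω => θ2 * A ω) + gXU := rfl
      rw [hsplit]
      refine (condExp_add iAth2 ig _).trans ?_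
      rw [condExp_of_stronglyMeasurable hm2le hg_m2.stronglyMeasurable ig]
      have e1 : μ[(fun ω => θ2 * A ω)|m ⊔ mUalg] =ᵐ[μ] fun ω => θ2 * piC ω := by
        have hsm : (fun ω => θ2 * A ω) = θ2 • A := by funext ω; simp [smul_eq_mul]
        rw [hsm]
        refine (condExp_smul θ2 A (m ⊔ mUalg)).trans ?_
        filter_upwards [hPA] with ω hω
        simp only [Pi.smul_apply, smul_eq_mul]
        rw [hω]
      filter_upwards [e1] with ω h1
      simp only [Pi.add_apply]
      rw [h1]
    filter_upwards [hsum] with ω hω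
    simp only [Pi.mul_apply]
    rw [hω]
  have hG3 : μ[(fun ω => (A ω - piC ω) * (θ2 * A ω + gXU ω))|m ⊔ mUalg] =ᵐ[μ]
      fun ω => θ2 * (Q ω - piC ω * piC ω) := by
    have hsplit : (fun ω => (A ω - piC ω) * (θ2 * A ω + gXU ω))
        = (fun ω => A ω * (θ2 * A ω + gXU ω)) - fun ω => piC ω * (θ2 * A ω + gXU ω) := by
      funext ω; simp; ring
    rw [hsplit]
    refine (condExp_sub iT1 iT2 _).trans ?_
    filter_upwards [hT1, hT2] with ω h1 h2
    simp only [Pi.sub_apply]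
    rw [h1, h2]
    ring
  refine ⟨?_, ?_, ?_⟩
  · -- component 1
    have he1 : (fun ω => d (X ω) i * (A ω - piX ω) * (Y ω - θ1 * M ω - θ2 * A ω))
        =ᵐ[μ] fun ω => d (X ω) i * (A ω - piC ω) * (Y ω - θ1 * M ω - θ2 * A ω) := by
      filter_upwards [hpiX] with ω hω
      rw [hω]
    rw [integral_congr_ae he1]
    have I1 : Integrable
        (fun ω => d (X ω) i * (A ω - piC ω) * (Y ω - θ1 * M ω - θ2 * A ω)) μ :=
      (hint1 i).congr he1
    have hF1sm : StronglyMeasurable[n1] fun ω => d (X ω) i * (A ω - piC ω) :=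
      (((hd i).comp hX_n1).mul
        (hA_n1.sub (hpiC_sm.measurable.mono hm_le_n1 le_rfl))).stronglyMeasurable
    have iψ1 : Integrable (fun ω => Y ω - θ1 * M ω - θ2 * A ω) μ :=
      (iY.sub (iM.const_mul θ1)).sub (iA.const_mul θ2)
    obtain ⟨s1, s1i⟩ := aux_step hn1le hF1sm I1 iψ1 hcY1
    have step1 : ∫ ω, d (X ω) i * (A ω - piC ω) * (Y ω - θ1 * M ω - θ2 * A ω) ∂μ
        = ∫ ω, d (X ω) i * (A ω - piC ω) * gXU ω ∂μ := s1
    rw [step1]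
    have hbr : (fun ω => d (X ω) i * (A ω - piC ω) * gXU ω)
        =ᵐ[μ] fun ω => d (X ω) i * gXU ω * (A ω - piC ω) :=
      Filter.Eventually.of_forall fun ω => by ring
    rw [integral_congr_ae hbr]
    have I2 : Integrable (fun ω => d (X ω) i * gXU ω * (A ω - piC ω)) μ := s1i.congr hbr
    have hF2sm : StronglyMeasurable[m ⊔ mUalg] fun ω => d (X ω) i * gXU ω :=
      (((hd i).comp hX_m2).mul hg_m2).stronglyMeasurable
    have iAp : Integrable (fun ω => A ω - piC ω) μ := iA.sub ipi
    obtain ⟨s2, -⟩ := aux_step hm2le hF2sm I2 iAp hApi0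
    have step2 : ∫ ω, d (X ω) i * gXU ω * (A ω - piC ω) ∂μ
        = ∫ ω, d (X ω) i * gXU ω * 0 ∂μ := s2
    rw [step2]
    simp
  · -- component 2
    have he2 : (fun ω => d (X ω) i * (A ω - piX ω)
          * ((M ω - θ3 * A ω - hstar ω) * (Y ω - θ1 * M ω)))
        =ᵐ[μ] fun ω => d (X ω) i * (A ω - piC ω)
          * ((M ω - θ3 * A ω - hsC ω) * (Y ω - θ1 * M ω)) := by
      filter_upwards [hpiX, hhstar] with ω h1 h2
      rw [h1, h2]
    rw [integral_congr_ae he2]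
    have J0 : Integrable (fun ω => d (X ω) i * (A ω - piC ω)
        * ((M ω - θ3 * A ω - hsC ω) * (Y ω - θ1 * M ω))) μ := (hint2 i).congr he2
    have hbr1 : (fun ω => d (X ω) i * (A ω - piC ω)
          * ((M ω - θ3 * A ω - hsC ω) * (Y ω - θ1 * M ω)))
        =ᵐ[μ] fun ω => d (X ω) i * (A ω - piC ω) * (M ω - θ3 * A ω - hsC ω)
          * (Y ω - θ1 * M ω) :=
      Filter.Eventually.of_forall fun ω => by ring
    rw [integral_congr_ae hbr1]
    have J1 : Integrable (fun ω => d (X ω) i * (A ω - piC ω) * (M ω - θ3 * A ω - hsC ω)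
        * (Y ω - θ1 * M ω)) μ := J0.congr hbr1
    have hF1sm : StronglyMeasurable[n1]
        fun ω => d (X ω) i * (A ω - piC ω) * (M ω - θ3 * A ω - hsC ω) :=
      ((((hd i).comp hX_n1).mul
        (hA_n1.sub (hpiC_sm.measurable.mono hm_le_n1 le_rfl))).mul
        ((hM_n1.sub (hA_n1.const_mul θ3)).sub
          (hhsC_sm.measurable.mono hm_le_n1 le_rfl))).stronglyMeasurable
    have iG1 : Integrable (fun ω => Y ω - θ1 * M ω) μ := iY.sub (iM.const_mul θ1)
    obtain ⟨s1, s1i⟩ := aux_step hn1le hF1sm J1 iG1 hcY2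
    have step1 : ∫ ω, d (X ω) i * (A ω - piC ω) * (M ω - θ3 * A ω - hsC ω)
          * (Y ω - θ1 * M ω) ∂μ
        = ∫ ω, d (X ω) i * (A ω - piC ω) * (M ω - θ3 * A ω - hsC ω)
          * (θ2 * A ω + gXU ω) ∂μ := s1
    rw [step1]
    have hbr2 : (fun ω => d (X ω) i * (A ω - piC ω) * (M ω - θ3 * A ω - hsC ω)
          * (θ2 * A ω + gXU ω))
        =ᵐ[μ] fun ω => d (X ω) i * (A ω - piC ω) * (θ2 * A ω + gXU ω)
          * (M ω - θ3 * A ω - hsC ω) :=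
      Filter.Eventually.of_forall fun ω => by ring
    rw [integral_congr_ae hbr2]
    have J2 : Integrable (fun ω => d (X ω) i * (A ω - piC ω) * (θ2 * A ω + gXU ω)
        * (M ω - θ3 * A ω - hsC ω)) μ := s1i.congr hbr2
    have hF2sm : StronglyMeasurable[n3]
        fun ω => d (X ω) i * (A ω - piC ω) * (θ2 * A ω + gXU ω) :=
      ((((hd i).comp hX_n3).mul
        (hA_n3.sub (hpiC_sm.measurable.mono hm_le_n3 le_rfl))).mul
        ((hA_n3.const_mul θ2).add hg_n3)).stronglyMeasurable
    have iG2 : Integrable (fun ω => M ω - θ3 * A ω - hsC ω) μ :=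
      (iM.sub (iA.const_mul θ3)).sub ihs
    obtain ⟨s2, s2i⟩ := aux_step hn3le hF2sm J2 iG2 hcM2
    have step2 : ∫ ω, d (X ω) i * (A ω - piC ω) * (θ2 * A ω + gXU ω)
          * (M ω - θ3 * A ω - hsC ω) ∂μ
        = ∫ ω, d (X ω) i * (A ω - piC ω) * (θ2 * A ω + gXU ω)
          * (hXU ω - hsC ω) ∂μ := s2
    rw [step2]
    have hbr3 : (fun ω => d (X ω) i * (A ω - piC ω) * (θ2 * A ω + gXU ω)
          * (hXU ω - hsC ω))
        =ᵐ[μ] fun ω => d (X ω) i * (hXU ω - hsC ω)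
          * ((A ω - piC ω) * (θ2 * A ω + gXU ω)) :=
      Filter.Eventually.of_forall fun ω => by ring
    rw [integral_congr_ae hbr3]
    have J3 : Integrable (fun ω => d (X ω) i * (hXU ω - hsC ω)
        * ((A ω - piC ω) * (θ2 * A ω + gXU ω))) μ := s2i.congr hbr3
    have hF3sm : StronglyMeasurable[m ⊔ mUalg] fun ω => d (X ω) i * (hXU ω - hsC ω) :=
      (((hd i).comp hX_m2).mul
        (hh_m2.sub (hhsC_sm.measurable.mono le_sup_left le_rfl))).stronglyMeasurable
    have iG3 : Integrable (fun ω => (A ω - piC ω) * (θ2 * A ω + gXU ω)) μ :=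
      aux_integrable_mul (hA.sub hpiL2) hL2sum
    obtain ⟨s3, s3i⟩ := aux_step hm2le hF3sm J3 iG3 hG3
    have step3 : ∫ ω, d (X ω) i * (hXU ω - hsC ω)
          * ((A ω - piC ω) * (θ2 * A ω + gXU ω)) ∂μ
        = ∫ ω, d (X ω) i * (hXU ω - hsC ω) * (θ2 * (Q ω - piC ω * piC ω)) ∂μ := s3
    rw [step3]
    have hbr4 : (fun ω => d (X ω) i * (hXU ω - hsC ω) * (θ2 * (Q ω - piC ω * piC ω)))
        =ᵐ[μ] fun ω => d (X ω) i * (θ2 * (Q ω - piC ω * piC ω)) * (hXU ω - hsC ω) :=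
      Filter.Eventually.of_forall fun ω => by ring
    rw [integral_congr_ae hbr4]
    have J4 : Integrable (fun ω => d (X ω) i * (θ2 * (Q ω - piC ω * piC ω))
        * (hXU ω - hsC ω)) μ := s3i.congr hbr4
    have hF4sm : StronglyMeasurable[m] fun ω => d (X ω) i * (θ2 * (Q ω - piC ω * piC ω)) :=
      (((hd i).comp hX_m).mul
        ((hQ_sm.measurable.sub
          (hpiC_sm.measurable.mul hpiC_sm.measurable)).const_mul θ2)).stronglyMeasurable
    have iG4 : Integrable (fun ω => hXU ω - hsC ω) μ := ih.sub ihs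
    obtain ⟨s4, -⟩ := aux_step hmle hF4sm J4 iG4 hhbar0
    have step4 : ∫ ω, d (X ω) i * (θ2 * (Q ω - piC ω * piC ω)) * (hXU ω - hsC ω) ∂μ
        = ∫ ω, d (X ω) i * (θ2 * (Q ω - piC ω * piC ω)) * 0 ∂μ := s4
    rw [step4]
    simp
  · -- component 3
    have he3 : (fun ω => d (X ω) i * (A ω - piX ω) * (M ω - θ3 * A ω))
        =ᵐ[μ] fun ω => d (X ω) i * (A ω - piC ω) * (M ω - θ3 * A ω) := by
      filter_upwards [hpiX] with ω hω
      rw [hω]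
    rw [integral_congr_ae he3]
    have I1 : Integrable (fun ω => d (X ω) i * (A ω - piC ω) * (M ω - θ3 * A ω)) μ :=
      (hint3 i).congr he3
    have hF1sm : StronglyMeasurable[n3] fun ω => d (X ω) i * (A ω - piC ω) :=
      (((hd i).comp hX_n3).mul
        (hA_n3.sub (hpiC_sm.measurable.mono hm_le_n3 le_rfl))).stronglyMeasurable
    have iψ3 : Integrable (fun ω => M ω - θ3 * A ω) μ := iM.sub (iA.const_mul θ3)
    obtain ⟨s1, s1i⟩ := aux_step hn3le hF1sm I1 iψ3 hcM3
    have step1 : ∫ ω, d (X ω) i * (A ω - piC ω) * (M ω - θ3 * A ω) ∂μ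
        = ∫ ω, d (X ω) i * (A ω - piC ω) * hXU ω ∂μ := s1
    rw [step1]
    have hbr : (fun ω => d (X ω) i * (A ω - piC ω) * hXU ω)
        =ᵐ[μ] fun ω => d (X ω) i * hXU ω * (A ω - piC ω) :=
      Filter.Eventually.of_forall fun ω => by ring
    rw [integral_congr_ae hbr]
    have I2 : Integrable (fun ω => d (X ω) i * hXU ω * (A ω - piC ω)) μ := s1i.congr hbr
    have hF2sm : StronglyMeasurable[m ⊔ mUalg] fun ω => d (X ω) i * hXU ω :=
      (((hd i).comp hX_m2).mul hh_m2).stronglyMeasurable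
    have iAp : Integrable (fun ω => A ω - piC ω) μ := iA.sub ipi
    obtain ⟨s2, -⟩ := aux_step hm2le hF2sm I2 iAp hApi0
    have step2 : ∫ ω, d (X ω) i * hXU ω * (A ω - piC ω) ∂μ
        = ∫ ω, d (X ω) i * hXU ω * 0 ∂μ := s2
    rw [step2]
    simp
end
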